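/- arXiv:1301.5568 — 4 statements merged into one kernel-verified Lean document; each statement's English description precedes it below -/
import Mathlib

section
/- Let (S_t)_{t=0}^T be a nonnegative martingale with S₀ = 1 such that E[S_T log S_T] < ∞. Then E[max_{0≤t≤T} S_t] ≤ (e/(e−1))·(E[S_T log S_T] + 1). -/
open MeasureTheory
open scoped ENNReal NNReal
open Real Set

lemma aux_log_int {b : ℝ} (hb : 1 ≤ b) :
    ∫⁻ t in Set.Ioc 1 b, (ENNReal.ofReal t)⁻¹ = ENNReal.ofReal (Real.log b) := by
  have h1 : ∀ t ∈ Set.Ioc (1:ℝ) b, (ENNReal.ofReal t)⁻¹ = ENNReal.ofReal t⁻¹ := by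
    intro t ht
    rw [ENNReal.ofReal_inv_of_pos (lt_trans one_pos ht.1)]
  rw [setLIntegral_congr_fun measurableSet_Ioc h1]
  have hint : IntegrableOn (fun t : ℝ => t⁻¹) (Set.Ioc 1 b) := by
    have hc : ContinuousOn (fun t : ℝ => t⁻¹) (Set.Icc 1 b) :=
      ContinuousOn.inv₀ continuousOn_id (fun x hx => ne_of_gt (lt_of_lt_of_le one_pos hx.1))
    exact (hc.integrableOn_Icc).mono_set Set.Ioc_subset_Icc_self
  rw [← ofReal_integral_eq_lintegral_ofReal hint ?_]
  · rw [← intervalIntegral.integral_of_le hb, integral_inv_of_pos one_pos (lt_of_lt_of_le one_pos hb), div_one]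
  · filter_upwards [ae_restrict_mem measurableSet_Ioc] with t ht
    exact inv_nonneg.2 (le_of_lt (lt_trans one_pos ht.1))

lemma young {a b : ℝ} (ha : 0 ≤ a) (hb : 1 ≤ b) :
    a * Real.log b ≤ a * Real.log a + b / Real.exp 1 := by
  rcases eq_or_lt_of_le ha with h | h
  · simp [← h]
    positivity
  · have hba : 0 < b / (a * Real.exp 1) := by positivity
    have := Real.log_le_sub_one_of_pos hba
    rw [Real.log_div (by positivity) (by positivity), Real.log_mul (ne_of_gt h) (Real.exp_ne_zero 1), Real.log_exp] at this
    have he : 0 < Real.exp 1 := Real.exp_pos 1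
    have hmul : a * (Real.log b - Real.log a) ≤ a * (b / (a * Real.exp 1)) := by
      apply mul_le_mul_of_nonneg_left _ ha; linarith
    have h3 : a * (b / (a * Real.exp 1)) = b / Real.exp 1 := by
      field_simp
    nlinarith

theorem stmt2 {Ω : Type*} {m : MeasurableSpace Ω} {μ : Measure Ω} [IsProbabilityMeasure μ]
    (ℱ : Filtration ℕ m) (T : ℕ) (S : ℕ → Ω → ℝ)
    (hmart : Martingale S ℱ μ)
    (hpos : ∀ t ω, 0 ≤ S t ω) (h0 : ∀ ω, S 0 ω = 1)
    (hint : Integrable (fun ω => S T ω * Real.log (S T ω)) μ) :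
    (∫ ω, (Finset.range (T + 1)).sup' Finset.nonempty_range_add_one (fun t => S t ω) ∂μ)
      ≤ Real.exp 1 / (Real.exp 1 - 1) * ((∫ ω, S T ω * Real.log (S T ω) ∂μ) + 1) := by
  set M : Ω → ℝ := fun ω => (Finset.range (T + 1)).sup' Finset.nonempty_range_add_one
    (fun t => S t ω) with hMdef
  have hSmeas : ∀ n, Measurable (S n) :=
    fun n => ((hmart.stronglyMeasurable n).measurable).le (ℱ.le n)
  have hMmeas : Measurable M := Finset.measurable_range_sup'' fun n _ => hSmeas n
  have hM1 : ∀ ω, 1 ≤ M ω := by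
    intro ω
    have := Finset.le_sup' (fun t => S t ω) (Finset.mem_range.2 (Nat.succ_pos T))
    rwa [h0 ω] at this
  have hMnn : ∀ ω, 0 ≤ M ω := fun ω => le_trans zero_le_one (hM1 ω)
  have hMint : Integrable M μ := by
    refine Integrable.mono' (integrable_finset_sum (Finset.range (T+1))
      (fun n _ => hmart.integrable n)) hMmeas.aestronglyMeasurable ?_
    refine Filter.Eventually.of_forall fun ω => ?_
    rw [Real.norm_eq_abs, abs_of_nonneg (hMnn ω)]
    apply Finset.sup'_le
    intro t ht
    exact Finset.single_le_sum (f := fun t => S t ω) (fun i _ => hpos i ω) ht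
  have gint : Integrable (S T) μ := hmart.integrable T
  -- the auxiliary kernel
  set F : ℝ → Ω → ENNReal := fun t ω => {p : ℝ × Ω | p.1 ≤ M p.2}.indicator
    (fun p => (ENNReal.ofReal p.1)⁻¹ * ENNReal.ofReal (S T p.2)) (t, ω) with hFdef
  have hFmeas : Measurable (Function.uncurry F) := by
    have : Function.uncurry F = Set.indicator {p : ℝ × Ω | p.1 ≤ M p.2}
        (fun p => (ENNReal.ofReal p.1)⁻¹ * ENNReal.ofReal (S T p.2)) := rfl
    rw [this]
    exact Measurable.indicator
      ((measurable_fst.ennreal_ofReal.inv).mul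
        (((hSmeas T).comp measurable_snd).ennreal_ofReal))
      (measurableSet_le measurable_fst (hMmeas.comp measurable_snd))
  -- maximal inequality step
  have bound2 : ∀ t ∈ Set.Ioi (1:ℝ), μ {ω | t < M ω} ≤ ∫⁻ ω, F t ω ∂μ := by
    intro t ht
    have ht0 : (0:ℝ) < t := lt_trans one_pos ht
    have hA : MeasurableSet {ω | t ≤ M ω} := measurableSet_le measurable_const hMmeas
    have hFt : (fun ω => F t ω) = Set.indicator {ω | t ≤ M ω}
        (fun ω => (ENNReal.ofReal t)⁻¹ * ENNReal.ofReal (S T ω)) := by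
      funext ω
      by_cases h : t ≤ M ω <;> simp [hFdef, Set.indicator_apply, h]
    have hnn : (0 : ℕ → Ω → ℝ) ≤ S := fun n => fun ω => hpos n ω
    have hmax := maximal_ineq (hmart.submartingale) hnn (ε := t.toNNReal) T
    have hcoe : ((t.toNNReal : ℝ)) = t := Real.coe_toNNReal t ht0.le
    rw [hcoe] at hmax
    have hofReal : (t.toNNReal : ℝ≥0∞) = ENNReal.ofReal t := rfl
    rw [hofReal] at hmax
    have hRHS : ENNReal.ofReal (∫ ω in {ω | t ≤ M ω}, S T ω ∂μ)
        = ∫⁻ ω in {ω | t ≤ M ω}, ENNReal.ofReal (S T ω) ∂μ :=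
      ofReal_integral_eq_lintegral_ofReal gint.integrableOn
        (Filter.Eventually.of_forall fun ω => hpos T ω)
    rw [hRHS] at hmax
    have hne : ENNReal.ofReal t ≠ 0 := (ENNReal.ofReal_pos.2 ht0).ne'
    calc μ {ω | t < M ω} ≤ μ {ω | t ≤ M ω} :=
          measure_mono fun ω (hω : t < M ω) => le_of_lt hω
      _ = (ENNReal.ofReal t)⁻¹ * (ENNReal.ofReal t * μ {ω | t ≤ M ω}) := by
          rw [← mul_assoc, ENNReal.inv_mul_cancel hne ENNReal.ofReal_ne_top, one_mul]
      _ ≤ (ENNReal.ofReal t)⁻¹ * ∫⁻ ω in {ω | t ≤ M ω}, ENNReal.ofReal (S T ω) ∂μ :=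
          mul_le_mul_right hmax _
      _ = ∫⁻ ω, F t ω ∂μ := by
          rw [hFt, lintegral_indicator hA, ← lintegral_const_mul']
          exact ENNReal.inv_ne_top.2 hne
  -- inner integral computation
  have inner : ∀ ω, (∫⁻ t in Set.Ioi (1:ℝ), F t ω)
      = ENNReal.ofReal (S T ω * Real.log (M ω)) := by
    intro ω
    have hFt : (fun t => F t ω) = Set.indicator (Set.Iic (M ω))
        (fun t => (ENNReal.ofReal t)⁻¹ * ENNReal.ofReal (S T ω)) := by
      funext t
      by_cases h : t ≤ M ω <;> simp [hFdef, Set.indicator_apply, h]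
    rw [hFt, lintegral_indicator measurableSet_Iic,
      Measure.restrict_restrict measurableSet_Iic, Set.inter_comm, Set.Ioi_inter_Iic,
      lintegral_mul_const' _ _ ENNReal.ofReal_ne_top, aux_log_int (hM1 ω),
      ← ENNReal.ofReal_mul (Real.log_nonneg (hM1 ω)), mul_comm]
  -- layer cake and combination
  have hlayer : ∫⁻ ω, ENNReal.ofReal (M ω) ∂μ = ∫⁻ t in Set.Ioi (0:ℝ), μ {ω | t < M ω} :=
    lintegral_eq_lintegral_meas_lt μ (Filter.Eventually.of_forall hMnn) hMmeas.aemeasurable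
  have hsplit : (∫⁻ t in Set.Ioi (0:ℝ), μ {ω | t < M ω})
      = (∫⁻ t in Set.Ioc (0:ℝ) 1, μ {ω | t < M ω}) + ∫⁻ t in Set.Ioi (1:ℝ), μ {ω | t < M ω} := by
    rw [← lintegral_union measurableSet_Ioi (Set.Ioc_disjoint_Ioi le_rfl),
      Set.Ioc_union_Ioi_eq_Ioi zero_le_one]
  have hsmall : (∫⁻ t in Set.Ioc (0:ℝ) 1, μ {ω | t < M ω}) ≤ 1 := by
    calc (∫⁻ t in Set.Ioc (0:ℝ) 1, μ {ω | t < M ω}) ≤ ∫⁻ _ in Set.Ioc (0:ℝ) 1, 1 :=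
          lintegral_mono fun t => prob_le_one
      _ = 1 := by simp
  have hbig : (∫⁻ t in Set.Ioi (1:ℝ), μ {ω | t < M ω})
      ≤ ∫⁻ ω, ENNReal.ofReal (S T ω * Real.log (M ω)) ∂μ := by
    calc (∫⁻ t in Set.Ioi (1:ℝ), μ {ω | t < M ω})
        ≤ ∫⁻ t in Set.Ioi (1:ℝ), ∫⁻ ω, F t ω ∂μ := by
          refine lintegral_mono_ae ?_
          filter_upwards [ae_restrict_mem measurableSet_Ioi] with t ht
          exact bound2 t ht
      _ = ∫⁻ ω, (∫⁻ t in Set.Ioi (1:ℝ), F t ω) ∂μ :=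
          lintegral_lintegral_swap hFmeas.aemeasurable
      _ = ∫⁻ ω, ENNReal.ofReal (S T ω * Real.log (M ω)) ∂μ := by
          exact lintegral_congr fun ω => inner ω
  -- the function h = S_T log M
  set h : Ω → ℝ := fun ω => S T ω * Real.log (M ω) with hhdef
  have hh_nonneg : ∀ ω, 0 ≤ h ω := fun ω => mul_nonneg (hpos T ω) (Real.log_nonneg (hM1 ω))
  have hh_le : ∀ ω, h ω ≤ S T ω * Real.log (S T ω) + M ω / Real.exp 1 :=
    fun ω => young (hpos T ω) (hM1 ω)
  have hφ_int : Integrable (fun ω => S T ω * Real.log (S T ω) + M ω / Real.exp 1) μ :=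
    hint.add (hMint.div_const _)
  have hh_meas : Measurable h := (hSmeas T).mul (Real.measurable_log.comp hMmeas)
  have hh_int : Integrable h μ := by
    refine hφ_int.mono' hh_meas.aestronglyMeasurable ?_
    refine Filter.Eventually.of_forall fun ω => ?_
    rw [Real.norm_eq_abs, abs_of_nonneg (hh_nonneg ω)]
    exact hh_le ω
  -- convert lintegrals to Bochner integrals
  have hMof : ∫⁻ ω, ENNReal.ofReal (M ω) ∂μ = ENNReal.ofReal (∫ ω, M ω ∂μ) :=
    (ofReal_integral_eq_lintegral_ofReal hMint (Filter.Eventually.of_forall hMnn)).symm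
  have hhof : ∫⁻ ω, ENNReal.ofReal (h ω) ∂μ = ENNReal.ofReal (∫ ω, h ω ∂μ) :=
    (ofReal_integral_eq_lintegral_ofReal hh_int (Filter.Eventually.of_forall hh_nonneg)).symm
  have key : ENNReal.ofReal (∫ ω, M ω ∂μ) ≤ ENNReal.ofReal (1 + ∫ ω, h ω ∂μ) := by
    rw [ENNReal.ofReal_add zero_le_one (integral_nonneg hh_nonneg), ENNReal.ofReal_one]
    calc ENNReal.ofReal (∫ ω, M ω ∂μ) = ∫⁻ ω, ENNReal.ofReal (M ω) ∂μ := hMof.symm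
      _ = (∫⁻ t in Set.Ioc (0:ℝ) 1, μ {ω | t < M ω}) + ∫⁻ t in Set.Ioi (1:ℝ), μ {ω | t < M ω} := by
          rw [hlayer, hsplit]
      _ ≤ 1 + ENNReal.ofReal (∫ ω, h ω ∂μ) := by
          rw [← hhof]
          exact add_le_add hsmall hbig
  have key2 : ∫ ω, M ω ∂μ ≤ 1 + ∫ ω, h ω ∂μ := by
    have hrhs : (0:ℝ) ≤ 1 + ∫ ω, h ω ∂μ := by
      have := integral_nonneg (μ := μ) (f := h) hh_nonneg
      linarith
    exact (ENNReal.ofReal_le_ofReal_iff hrhs).1 key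
  have key3 : ∫ ω, h ω ∂μ ≤ (∫ ω, S T ω * Real.log (S T ω) ∂μ) + (∫ ω, M ω ∂μ) / Real.exp 1 := by
    calc ∫ ω, h ω ∂μ ≤ ∫ ω, (S T ω * Real.log (S T ω) + M ω / Real.exp 1) ∂μ :=
          integral_mono hh_int hφ_int hh_le
      _ = (∫ ω, S T ω * Real.log (S T ω) ∂μ) + ∫ ω, M ω / Real.exp 1 ∂μ :=
          integral_add hint (hMint.div_const _)
      _ = (∫ ω, S T ω * Real.log (S T ω) ∂μ) + (∫ ω, M ω ∂μ) / Real.exp 1 := by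
          rw [integral_div]
  -- final algebra
  set A := ∫ ω, M ω ∂μ
  set I := ∫ ω, S T ω * Real.log (S T ω) ∂μ
  have he : (1:ℝ) < Real.exp 1 := by
    have := Real.add_one_le_exp 1
    linarith
  have hA : A ≤ 1 + I + A / Real.exp 1 := by linarith
  rw [div_mul_eq_mul_div, le_div_iff₀ (by linarith)]
  have hAe : A * (Real.exp 1 - 1) ≤ (1 + I) * Real.exp 1 := by
    have h1 : A / Real.exp 1 * Real.exp 1 = A := div_mul_cancel₀ _ (ne_of_gt (by linarith))
    nlinarith
  nlinarith
end

section
/- Let μ be a probability measure on [0,∞) with finite first moment, and let f : [0,∞) → ℝ be convex and μ-integrable. Then there exists a convex function f̄ : [0,∞) → ℝ that is μ-integrable and satisfies |f̄(x)|/|f(x)| → ∞ as x → ∞ (equivalently: |f̄(x)|/(1+|f(x)|) → ∞). -/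
open MeasureTheory Filter Topology

-- tail of a finite measure on Ici n tends to 0
lemma tail_tendsto (ν : Measure ℝ) [IsFiniteMeasure ν] :
    Tendsto (fun n : ℕ => ν (Set.Ici (n : ℝ))) atTop (𝓝 0) := by
  have h := tendsto_measure_iInter_atTop (μ := ν) (s := fun n : ℕ => Set.Ici (n : ℝ))
    (fun n => measurableSet_Ici.nullMeasurableSet)
    (fun m n hmn => Set.Ici_subset_Ici.2 (by exact_mod_cast hmn))
    ⟨0, measure_ne_top _ _⟩
  have : (⋂ n : ℕ, Set.Ici ((n : ℝ))) = ∅ := by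
    ext x
    simp only [Set.mem_iInter, Set.mem_Ici, Set.mem_empty_iff_false, iff_false, not_forall, not_le]
    exact ⟨⌈x⌉₊ + 1, by push_cast; linarith [Nat.le_ceil x]⟩
  rw [this] at h
  simpa [Function.comp_def] using h

theorem aux_dVP (μ : Measure ℝ) [IsProbabilityMeasure μ] (G : ℝ → ℝ)
    (hGconv : ConvexOn ℝ (Set.Ici (0:ℝ)) G) (hGmono : Monotone G)
    (hGpos : ∀ x, 1 ≤ G x) (hGgrow : ∀ x : ℝ, x ≤ G x) (hGint : Integrable G μ) :
    ∃ H : ℝ → ℝ, ConvexOn ℝ (Set.Ici (0:ℝ)) H ∧ Integrable H μ ∧ (∀ x, 0 ≤ H x) ∧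
      Tendsto (fun x => H x / G x) atTop atTop := by
  classical
  have hGmeas : Measurable G := hGmono.measurable
  set ν : Measure ℝ := μ.withDensity (fun x => ENNReal.ofReal (G x)) with hν
  have hνfin : IsFiniteMeasure ν := by
    constructor
    rw [hν, withDensity_apply _ MeasurableSet.univ, Measure.restrict_univ]
    calc ∫⁻ x, ENNReal.ofReal (G x) ∂μ ≤ ∫⁻ x, ‖G x‖ₑ ∂μ := by
          apply lintegral_mono; intro x
          refine le_trans (ENNReal.ofReal_le_ofReal (le_abs_self _)) (le_of_eq ?_)
          rw [← Real.norm_eq_abs, ofReal_norm]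
      _ < ⊤ := hGint.2
  have htail := tail_tendsto ν
  have hKex : ∀ n : ℕ, ∃ k : ℕ, ν (Set.Ici ((k : ℕ) : ℝ)) ≤ (2⁻¹ : ENNReal) ^ n := by
    intro n
    obtain ⟨N, hN⟩ := ENNReal.tendsto_atTop_zero.mp htail ((2⁻¹ : ENNReal) ^ n)
      (ENNReal.pow_pos (ENNReal.inv_pos.mpr (by norm_num)) n)
    exact ⟨N, hN N le_rfl⟩
  choose K hK using hKex
  set ξ : ℕ → ℝ := fun n => ((2 + n + ∑ k ∈ Finset.range (n + 1), K k : ℕ) : ℝ) with hξ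
  have hξmono : Monotone ξ := by
    intro m n hmn
    have h1 : ∑ k ∈ Finset.range (m + 1), K k ≤ ∑ k ∈ Finset.range (n + 1), K k :=
      Finset.sum_le_sum_of_subset (Finset.range_subset_range.2 (by omega))
    have h2 : (2 + m + ∑ k ∈ Finset.range (m + 1), K k : ℕ)
        ≤ (2 + n + ∑ k ∈ Finset.range (n + 1), K k : ℕ) := by omega
    simp only [hξ]
    exact_mod_cast h2
  have hξn : ∀ n : ℕ, (n : ℝ) ≤ ξ n := by
    intro n
    have h2 : (n : ℕ) ≤ 2 + n + ∑ k ∈ Finset.range (n + 1), K k := by omega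
    simp only [hξ]
    exact_mod_cast h2
  have hξ0 : ∀ n, (0:ℝ) ≤ ξ n := fun n => le_trans (Nat.cast_nonneg n) (hξn n)
  have hνξ : ∀ n, ν (Set.Ici (ξ n)) ≤ (2⁻¹ : ENNReal) ^ n := by
    intro n
    refine le_trans (measure_mono (Set.Ici_subset_Ici.2 ?_)) (hK n)
    have : K n ≤ 2 + n + ∑ k ∈ Finset.range (n + 1), K k := by
      have := Finset.single_le_sum (f := K) (fun i _ => Nat.zero_le _)
        (Finset.self_mem_range_succ n)
      omega
    simp only [hξ]
    exact_mod_cast this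
  set E : ℕ → ℝ → ℝ := fun n z => G (max z (ξ n)) - G (ξ n) with hE
  set H : ℝ → ℝ := fun z => ∑' n, E n z with hH
  have hEnn : ∀ n z, 0 ≤ E n z := fun n z => sub_nonneg.2 (hGmono (le_max_right _ _))
  have hE0 : ∀ n z, z ≤ ξ n → E n z = 0 := by
    intro n z h; simp [hE, max_eq_right h]
  have hEmono : ∀ n, Monotone (E n) := fun n z w h =>
    sub_le_sub_right (hGmono (max_le_max h le_rfl)) _
  have hEconv : ∀ n, ConvexOn ℝ (Set.Ici (0:ℝ)) (E n) := by
    intro n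
    refine ⟨convex_Ici 0, fun p hp q hq a b ha hb hab => ?_⟩
    simp only [smul_eq_mul]
    have hmp : max p (ξ n) ∈ Set.Ici (0:ℝ) := le_trans (hξ0 n) (le_max_right _ _)
    have hmq : max q (ξ n) ∈ Set.Ici (0:ℝ) := le_trans (hξ0 n) (le_max_right _ _)
    have h1 : max (a * p + b * q) (ξ n) ≤ a * max p (ξ n) + b * max q (ξ n) := by
      apply max_le
      · exact add_le_add (mul_le_mul_of_nonneg_left (le_max_left _ _) ha)
          (mul_le_mul_of_nonneg_left (le_max_left _ _) hb)
      · calc ξ n = a * ξ n + b * ξ n := by rw [← add_mul, hab, one_mul]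
          _ ≤ a * max p (ξ n) + b * max q (ξ n) :=
            add_le_add (mul_le_mul_of_nonneg_left (le_max_right _ _) ha)
              (mul_le_mul_of_nonneg_left (le_max_right _ _) hb)
    have h2 := hGconv.2 hmp hmq ha hb hab
    simp only [smul_eq_mul] at h2
    calc E n (a * p + b * q) = G (max (a * p + b * q) (ξ n)) - G (ξ n) := rfl
      _ ≤ G (a * max p (ξ n) + b * max q (ξ n)) - G (ξ n) :=
        sub_le_sub_right (hGmono h1) _
      _ ≤ (a * G (max p (ξ n)) + b * G (max q (ξ n))) - G (ξ n) := sub_le_sub_right h2 _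
      _ = a * E n p + b * E n q := by
        simp only [hE]; linear_combination (G (ξ n)) * hab
  have hsummable : ∀ z, Summable (fun n => E n z) := by
    intro z
    apply summable_of_ne_finset_zero (s := Finset.range ⌈z⌉₊)
    intro n hn
    have hn' : ⌈z⌉₊ ≤ n := by simpa [Finset.mem_range, not_lt] using hn
    exact hE0 n z (le_trans (Nat.le_ceil z) (le_trans (by exact_mod_cast hn') (hξn n)))
  have hHsum : ∀ (z : ℝ) (N : ℕ), z ≤ (N : ℝ) → H z = ∑ n ∈ Finset.range N, E n z := by
    intro z N hz
    apply tsum_eq_sum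
    intro n hn
    have hn' : N ≤ n := by simpa [Finset.mem_range, not_lt] using hn
    exact hE0 n z (le_trans hz (le_trans (by exact_mod_cast hn') (hξn n)))
  have hHnn : ∀ z, 0 ≤ H z := fun z => tsum_nonneg (fun n => hEnn n z)
  have hPconv : ∀ N : ℕ, ConvexOn ℝ (Set.Ici (0:ℝ)) (fun z => ∑ n ∈ Finset.range N, E n z) := by
    intro N
    induction N with
    | zero => simpa using convexOn_const (0:ℝ) (convex_Ici (0:ℝ))
    | succ N ih =>
      simp only [Finset.sum_range_succ]
      exact ih.add (hEconv N)
  have hHconv : ConvexOn ℝ (Set.Ici (0:ℝ)) H := by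
    refine ⟨convex_Ici 0, fun p hp q hq a b ha hb hab => ?_⟩
    set N := ⌈max p q⌉₊ with hNdef
    have hpN : p ≤ (N : ℝ) := le_trans (le_max_left _ _) (Nat.le_ceil _)
    have hqN : q ≤ (N : ℝ) := le_trans (le_max_right _ _) (Nat.le_ceil _)
    have hcN : a • p + b • q ≤ (N : ℝ) := by
      simp only [smul_eq_mul]
      calc a * p + b * q ≤ a * (N:ℝ) + b * (N:ℝ) :=
        add_le_add (mul_le_mul_of_nonneg_left hpN ha) (mul_le_mul_of_nonneg_left hqN hb)
        _ = (N:ℝ) := by rw [← add_mul, hab, one_mul]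
    rw [hHsum _ N hcN, hHsum p N hpN, hHsum q N hqN]
    exact (hPconv N).2 hp hq ha hb hab
  have hHmono : Monotone H := by
    intro z w hzw
    have hwN : w ≤ ((⌈w⌉₊ : ℕ) : ℝ) := Nat.le_ceil w
    rw [hHsum z ⌈w⌉₊ (le_trans hzw hwN)]
    calc ∑ n ∈ Finset.range ⌈w⌉₊, E n z ≤ ∑ n ∈ Finset.range ⌈w⌉₊, E n w :=
          Finset.sum_le_sum (fun i _ => hEmono i hzw)
      _ ≤ H w := Summable.sum_le_tsum _ (fun i _ => hEnn i w) (hsummable w)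
  have hHmeas : Measurable H := hHmono.measurable
  have hlint : ∫⁻ z, ENNReal.ofReal (H z) ∂μ < ⊤ := by
    have heq : ∀ z, ENNReal.ofReal (H z) = ∑' n, ENNReal.ofReal (E n z) := fun z =>
      ENNReal.ofReal_tsum_of_nonneg (fun n => hEnn n z) (hsummable z)
    have hterm : ∀ n, ∫⁻ z, ENNReal.ofReal (E n z) ∂μ ≤ (2⁻¹ : ENNReal) ^ n := by
      intro n
      have hpt : ∀ z, ENNReal.ofReal (E n z)
          ≤ Set.indicator (Set.Ici (ξ n)) (fun z => ENNReal.ofReal (G z)) z := by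
        intro z
        by_cases hz : ξ n ≤ z
        · rw [Set.indicator_of_mem (Set.mem_Ici.mpr hz)]
          apply ENNReal.ofReal_le_ofReal
          have : E n z = G z - G (ξ n) := by simp [hE, max_eq_left hz]
          rw [this]
          linarith [le_trans zero_le_one (hGpos (ξ n))]
        · rw [Set.indicator_of_notMem (by simpa [Set.mem_Ici] using hz), hE0 n z (le_of_not_ge hz)]
          simp
      calc ∫⁻ z, ENNReal.ofReal (E n z) ∂μ
          ≤ ∫⁻ z, Set.indicator (Set.Ici (ξ n)) (fun z => ENNReal.ofReal (G z)) z ∂μ :=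
            lintegral_mono hpt
        _ = ∫⁻ z in Set.Ici (ξ n), ENNReal.ofReal (G z) ∂μ :=
            lintegral_indicator measurableSet_Ici _
        _ = ν (Set.Ici (ξ n)) := (withDensity_apply _ measurableSet_Ici).symm
        _ ≤ (2⁻¹ : ENNReal) ^ n := hνξ n
    calc ∫⁻ z, ENNReal.ofReal (H z) ∂μ = ∫⁻ z, ∑' n, ENNReal.ofReal (E n z) ∂μ := by
          simp only [heq]
      _ = ∑' n, ∫⁻ z, ENNReal.ofReal (E n z) ∂μ :=
          lintegral_tsum (fun n => ((hEmono n).measurable.ennreal_ofReal).aemeasurable)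
      _ ≤ ∑' n, (2⁻¹ : ENNReal) ^ n := ENNReal.tsum_le_tsum hterm
      _ = (1 - 2⁻¹)⁻¹ := ENNReal.tsum_geometric _
      _ < ⊤ := by
          rw [ENNReal.one_sub_inv_two, inv_inv]
          exact ENNReal.ofNat_lt_top
  have hHint : Integrable H μ :=
    ⟨hHmeas.aestronglyMeasurable, (hasFiniteIntegral_iff_ofReal (ae_of_all _ hHnn)).2 hlint⟩
  refine ⟨H, hHconv, hHint, hHnn, ?_⟩
  rw [tendsto_atTop]
  intro C
  set N := ⌈C⌉₊ + 1 with hNdef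
  have hNC : C + 1 ≤ (N : ℝ) := by
    have := Nat.le_ceil C
    push_cast [hNdef]
    linarith
  filter_upwards [eventually_ge_atTop (ξ N), eventually_ge_atTop ((N : ℝ) * G (ξ N))]
    with x hx1 hx2
  have hGx : x ≤ G x := hGgrow x
  have hGxpos : (0:ℝ) < G x := lt_of_lt_of_le zero_lt_one (hGpos x)
  have hlow : (N : ℝ) * (G x - G (ξ N)) ≤ H x := by
    have hbd : ∀ n ∈ Finset.range N, G x - G (ξ N) ≤ E n x := by
      intro n hn
      have hnN : ξ n ≤ ξ N := hξmono (Finset.mem_range.1 hn).le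
      have hxn : ξ n ≤ x := le_trans hnN hx1
      have : E n x = G x - G (ξ n) := by simp [hE, max_eq_left hxn]
      rw [this]
      linarith [hGmono hnN]
    calc (N : ℝ) * (G x - G (ξ N)) = ∑ _n ∈ Finset.range N, (G x - G (ξ N)) := by
          rw [Finset.sum_const, Finset.card_range, nsmul_eq_mul]
      _ ≤ ∑ n ∈ Finset.range N, E n x := Finset.sum_le_sum hbd
      _ ≤ H x := Summable.sum_le_tsum _ (fun i _ => hEnn i x) (hsummable x)
  rw [le_div_iff₀ hGxpos]
  nlinarith [hlow, hx2, hGx, hNC, hGxpos]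

theorem stmt3 (μ : Measure ℝ) [IsProbabilityMeasure μ] (hsupp : μ (Set.Iio 0) = 0)
    (hmom : Integrable (fun y => y) μ)
    (f : ℝ → ℝ) (hconv : ConvexOn ℝ (Set.Ici (0:ℝ)) f) (hint : Integrable f μ) :
    ∃ fbar : ℝ → ℝ, ConvexOn ℝ (Set.Ici (0:ℝ)) fbar ∧ Integrable fbar μ ∧
      Tendsto (fun x => |fbar x| / (1 + |f x|)) atTop atTop := by
  classical
  set s : ℝ := f 2 - f 1 with hs
  have hslope : ∀ x : ℝ, 2 ≤ x → f 2 + s * (x - 2) ≤ f x := by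
    intro x hx
    rcases eq_or_lt_of_le hx with h | h
    · rw [← h]; simp
    · have key := hconv.slope_mono_adjacent (show (1:ℝ) ∈ Set.Ici 0 by norm_num)
        (show x ∈ Set.Ici (0:ℝ) by simp only [Set.mem_Ici]; linarith)
        (by norm_num : (1:ℝ) < 2) h
      have hx2 : (0:ℝ) < x - 2 := by linarith
      rw [show (2:ℝ) - 1 = 1 by norm_num, div_one] at key
      have := (le_div_iff₀ hx2).1 key
      nlinarith
  set l : ℝ → ℝ := fun x => (2 * s - f 2) - s * x with hl
  have hlconv : ConvexOn ℝ (Set.Ici (0:ℝ)) l := by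
    refine ⟨convex_Ici 0, fun p _ q _ a b ha hb hab => ?_⟩
    simp only [hl, smul_eq_mul]
    apply le_of_eq
    linear_combination (2 * s - f 2) * hab.symm
  set G₀ : ℝ → ℝ := fun x => max (f x) (l x) with hG₀
  have hG₀conv : ConvexOn ℝ (Set.Ici (0:ℝ)) G₀ := by
    exact hconv.sup hlconv
  set C : ℝ := max (G₀ 0) 1 with hC
  set G₁ : ℝ → ℝ := fun x => max (G₀ x) C with hG₁
  have hG₁conv : ConvexOn ℝ (Set.Ici (0:ℝ)) G₁ := by
    exact hG₀conv.sup (convexOn_const C (convex_Ici 0))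
  have hG₁C : ∀ x, C ≤ G₁ x := fun x => le_max_right _ _
  have hG₁mono : MonotoneOn G₁ (Set.Ici (0:ℝ)) := by
    intro u hu v hv huv
    have hv0 : (0:ℝ) ≤ v := hv
    have hseg : u ∈ segment ℝ (0:ℝ) v := by
      rw [segment_eq_Icc hv0]
      exact ⟨hu, huv⟩
    have hbound : G₀ u ≤ max (G₀ 0) (G₀ v) :=
      hG₀conv.le_on_segment (Set.self_mem_Ici) hv hseg
    simp only [hG₁]
    apply max_le _ (le_max_right _ _)
    calc G₀ u ≤ max (G₀ 0) (G₀ v) := hbound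
      _ ≤ max (G₀ v) C := by
        apply max_le
        · exact le_trans (le_trans (le_max_left (G₀ 0) 1) le_rfl) (le_max_right _ _)
        · exact le_max_left _ _
  set G : ℝ → ℝ := fun x => G₁ (max x 0) + (max x 0) + 1 with hG
  have hGmono : Monotone G := by
    intro u v huv
    simp only [hG]
    have h1 : G₁ (max u 0) ≤ G₁ (max v 0) :=
      hG₁mono (Set.mem_Ici.mpr (le_max_right u 0)) (Set.mem_Ici.mpr (le_max_right v 0))
        (max_le_max huv le_rfl)
    have h2 : max u 0 ≤ max v 0 := max_le_max huv le_rfl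
    linarith
  have hGconv : ConvexOn ℝ (Set.Ici (0:ℝ)) G := by
    have base : ConvexOn ℝ (Set.Ici (0:ℝ)) (fun x => G₁ x + x + 1) := by
      have h1 := (hG₁conv.add (convexOn_id (convex_Ici (0:ℝ)))).add
        (convexOn_const (1:ℝ) (convex_Ici (0:ℝ)))
      exact h1
    refine ⟨convex_Ici 0, fun p hp q hq a b ha hb hab => ?_⟩
    have hp0 : (0:ℝ) ≤ p := hp
    have hq0 : (0:ℝ) ≤ q := hq
    have hc0 : (0:ℝ) ≤ a * p + b * q := by positivity
    have key := base.2 hp hq ha hb hab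
    simp only [smul_eq_mul] at key ⊢
    simp only [hG, max_eq_left hp0, max_eq_left hq0, max_eq_left hc0]
    simpa using key
  have hCpos : (1:ℝ) ≤ C := le_max_right _ _
  have hGpos : ∀ x, 1 ≤ G x := by
    intro x
    simp only [hG]
    have h1 : C ≤ G₁ (max x 0) := hG₁C _
    have h2 : (0:ℝ) ≤ max x 0 := le_max_right _ _
    linarith
  have hGgrow : ∀ x : ℝ, x ≤ G x := by
    intro x
    simp only [hG]
    have h1 : C ≤ G₁ (max x 0) := hG₁C _
    have h2 : x ≤ max x 0 := le_max_left _ _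
    linarith
  have hae : ∀ᵐ y ∂μ, 0 ≤ y := by
    rw [ae_iff]
    have : {a : ℝ | ¬ 0 ≤ a} = Set.Iio 0 := by ext a; simp [not_le]
    rw [this]; exact hsupp
  have hGint : Integrable G μ := by
    have hbint : Integrable (fun y => |f y| + (|s| + 1) * |y|
        + (|2 * s - f 2| + |C| + 1)) μ :=
      (hint.abs.add ((hmom.abs).const_mul (|s| + 1))).add (integrable_const _)
    refine hbint.mono' hGmono.measurable.aestronglyMeasurable ?_
    filter_upwards [hae] with y hy
    have hmy : max y 0 = y := max_eq_left hy
    have hG₁y : G₁ y ≤ |f y| + |s| * |y| + |2 * s - f 2| + |C| := by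
      have hfb : f y ≤ |f y| := le_abs_self _
      have hlb : l y ≤ |2 * s - f 2| + |s| * |y| := by
        simp only [hl]
        have e1 : 2 * s - f 2 ≤ |2 * s - f 2| := le_abs_self _
        have e2 : -(s * y) ≤ |s * y| := neg_le_abs _
        have e3 : |s * y| = |s| * |y| := abs_mul _ _
        linarith
      have hCb : C ≤ |C| := le_abs_self _
      simp only [hG₁, hG₀]
      have nn1 : (0:ℝ) ≤ |f y| := abs_nonneg _
      have nn2 : (0:ℝ) ≤ |s| * |y| := by positivity
      have nn3 : (0:ℝ) ≤ |2 * s - f 2| := abs_nonneg _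
      have nn4 : (0:ℝ) ≤ |C| := abs_nonneg _
      apply max_le (max_le _ _) _
      · linarith
      · linarith
      · linarith
    have hGy : ‖G y‖ = G y := by
      rw [Real.norm_eq_abs, abs_of_nonneg]
      have := hGpos y; linarith
    rw [hGy]
    simp only [hG, hmy]
    have hyabs : y ≤ |y| := le_abs_self _
    have : (0:ℝ) ≤ |y| := abs_nonneg _
    nlinarith [abs_nonneg s]
  obtain ⟨H, hHconv, hHint, hHnn, hHtend⟩ := aux_dVP μ G hGconv hGmono hGpos hGgrow hGint
  refine ⟨H, hHconv, hHint, ?_⟩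
  apply tendsto_atTop_mono' atTop ?_ hHtend
  filter_upwards [eventually_ge_atTop (2:ℝ)] with x hx
  have hx0 : (0:ℝ) ≤ x := by linarith
  have hfG : 1 + |f x| ≤ G x := by
    have habs : |f x| ≤ G₀ x := by
      rw [abs_le]
      constructor
      · have hlx : -f x ≤ l x := by
          have := hslope x hx
          simp only [hl, hs]
          simp only [hs] at this
          linarith
        have h2 : l x ≤ G₀ x := le_max_right _ _
        linarith
      · exact le_max_left _ _
    have h3 : G₀ x ≤ G₁ x := le_max_left _ _
    simp only [hG, max_eq_left hx0]
    linarith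
  have h0 : (0:ℝ) < 1 + |f x| := by positivity
  rw [abs_of_nonneg (hHnn x)]
  exact div_le_div_of_nonneg_left (hHnn x) h0 hfG
end

section
/- Let ν be a probability measure on [0,∞) with finite first moment. Then there exist constants c ∈ ℝ, nonnegative reals α_n, and strikes K_n ↑ ∞ such that, with p_n = ∫_{K_n}^∞ (y − K_n) dν(y), one has Σ α_n = ∞ and Σ α_n p_n < ∞, and the function g₀(y) = Σ_{n=1}^∞ α_n((y−K_n)₊ − p_n) is convex, superlinear (g₀(y)/y → ∞), and ν-integrable. Moreover, for any prescribed convex superlinear ḡ ∈ L¹(ν) one can choose the α_n, K_n, c so that ḡ(y) ≤ c + Σ_n α_n (y − K_n)₊ for all y ≥ 0. -/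
open MeasureTheory Filter
set_option linter.unusedSectionVars false
set_option linter.unusedVariables false
set_option maxHeartbeats 1000000


noncomputable def price (ν : Measure ℝ) (k : ℝ) : ℝ := ∫ y, max (y - k) 0 ∂ν

section PriceLemmas

variable {ν : Measure ℝ} [IsProbabilityMeasure ν]

lemma call_integrable (hmom : Integrable (fun y => y) ν) (k : ℝ) :
    Integrable (fun y => max (y - k) 0) ν :=
  (hmom.sub (integrable_const k)).pos_part

lemma price_nonneg (k : ℝ) : 0 ≤ price ν k :=
  integral_nonneg fun y => le_max_right _ _

lemma price_antitone (hmom : Integrable (fun y => y) ν) : Antitone (price ν) := by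
  intro k1 k2 h
  refine integral_mono (call_integrable hmom k2) (call_integrable hmom k1) fun y => ?_
  exact max_le_max (by linarith) le_rfl

lemma price_lipschitz (hmom : Integrable (fun y => y) ν) (k1 k2 : ℝ) :
    |price ν k1 - price ν k2| ≤ |k1 - k2| := by
  have h1 : price ν k1 - price ν k2 = ∫ y, (max (y - k1) 0 - max (y - k2) 0) ∂ν := by
    rw [price, price, integral_sub (call_integrable hmom k1) (call_integrable hmom k2)]
  rw [h1]
  calc |∫ y, (max (y - k1) 0 - max (y - k2) 0) ∂ν|
      ≤ ∫ y, |max (y - k1) 0 - max (y - k2) 0| ∂ν := by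
        simpa [Real.norm_eq_abs] using
          norm_integral_le_integral_norm (fun y => max (y - k1) 0 - max (y - k2) 0) (μ := ν)
    _ ≤ ∫ (_ : ℝ), |k1 - k2| ∂ν := by
        refine integral_mono ((call_integrable hmom k1).sub (call_integrable hmom k2)).abs
          (integrable_const _) fun y => ?_
        have := abs_max_sub_max_le_abs (y - k1) (y - k2) 0
        calc |max (y - k1) 0 - max (y - k2) 0| ≤ |(y - k1) - (y - k2)| :=
              abs_max_sub_max_le_abs _ _ 0
          _ = |k1 - k2| := by rw [show (y - k1) - (y - k2) = -(k1 - k2) by ring, abs_neg]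
    _ = |k1 - k2| := by simp

lemma price_continuous (hmom : Integrable (fun y => y) ν) : Continuous (price ν) := by
  rw [Metric.continuous_iff]
  intro b ε hε
  exact ⟨ε, hε, fun a ha => by
    rw [Real.dist_eq] at ha ⊢; exact lt_of_le_of_lt (price_lipschitz hmom a b) ha⟩

lemma price_tendsto_zero (hmom : Integrable (fun y => y) ν) :
    Tendsto (price ν) atTop (nhds 0) := by
  have h0 : (0:ℝ) = ∫ (_ : ℝ), (0:ℝ) ∂ν := by simp
  rw [h0]
  refine tendsto_integral_filter_of_dominated_convergence (fun y => max y 0)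
    ?_ ?_ (hmom.pos_part) ?_
  · exact Eventually.of_forall fun k =>
      ((continuous_id.sub continuous_const).max continuous_const).aestronglyMeasurable
  · filter_upwards [eventually_ge_atTop (0:ℝ)] with k hk
    refine Eventually.of_forall fun y => ?_
    rw [Real.norm_eq_abs, abs_of_nonneg (le_max_right _ _)]
    exact max_le_max (by linarith) le_rfl
  · refine Eventually.of_forall fun y => ?_
    have : ∀ᶠ k in atTop, max (y - k) 0 = 0 := by
      filter_upwards [eventually_ge_atTop y] with k hk
      exact max_eq_right (by linarith)
    exact Tendsto.congr' (this.mono fun k hk => hk.symm) tendsto_const_nhds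

end PriceLemmas

section SlopeLemmas

variable {gbar : ℝ → ℝ}

lemma slope_left_le (hgc : ConvexOn ℝ (Set.Ici (0:ℝ)) gbar) {x y z : ℝ} (hx : 0 ≤ x)
    (hxy : x < y) (hyz : y < z) :
    (gbar y - gbar x) / (y - x) ≤ (gbar z - gbar x) / (z - x) := by
  have h := hgc.slope_mono_adjacent (Set.mem_Ici.2 hx)
    (Set.mem_Ici.2 (by linarith : (0:ℝ) ≤ z)) hxy hyz
  rw [div_le_div_iff₀ (by linarith) (by linarith)] at h ⊢
  nlinarith [h]

lemma slope_right_le (hgc : ConvexOn ℝ (Set.Ici (0:ℝ)) gbar) {x y z : ℝ} (hx : 0 ≤ x)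
    (hxy : x < y) (hyz : y < z) :
    (gbar z - gbar x) / (z - x) ≤ (gbar z - gbar y) / (z - y) := by
  have h := hgc.slope_mono_adjacent (Set.mem_Ici.2 hx)
    (Set.mem_Ici.2 (by linarith : (0:ℝ) ≤ z)) hxy hyz
  rw [div_le_div_iff₀ (by linarith) (by linarith)] at h ⊢
  nlinarith [h]

/-- chord bound: for `x ≤ y ≤ z`, `gbar y ≤ gbar x + slope(x,z) * (y - x)`. -/
lemma chord_bound (hgc : ConvexOn ℝ (Set.Ici (0:ℝ)) gbar) {x y z : ℝ} (hx : 0 ≤ x)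
    (hxy : x ≤ y) (hyz : y ≤ z) (hxz : x < z) :
    gbar y ≤ gbar x + (gbar z - gbar x) / (z - x) * (y - x) := by
  rcases eq_or_lt_of_le hxy with rfl | hxy'
  · simp
  rcases eq_or_lt_of_le hyz with rfl | hyz'
  · rw [div_mul_cancel₀]; · ring_nf; exact le_rfl
    · linarith
  · have h := slope_left_le hgc hx hxy' hyz'
    rw [div_le_div_iff₀ (by linarith) (by linarith)] at h
    have h2 : gbar y - gbar x ≤ (gbar z - gbar x) / (z - x) * (y - x) := by
      rw [div_mul_eq_mul_div, le_div_iff₀ (by linarith)]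
      nlinarith [h]
    linarith

end SlopeLemmas

section Defs
noncomputable def sl (gbar : ℝ → ℝ) (K : ℕ → ℝ) (n : ℕ) : ℝ :=
  (gbar (K (n+1)) - gbar (K n)) / (K (n+1) - K n)

noncomputable def Aseq (gbar : ℝ → ℝ) (K : ℕ → ℝ) (n : ℕ) : ℝ := max (sl gbar K n) 0

noncomputable def alph (gbar : ℝ → ℝ) (K : ℕ → ℝ) : ℕ → ℝ
  | 0 => Aseq gbar K 0
  | (m+1) => Aseq gbar K (m+1) - Aseq gbar K m

variable {gbar : ℝ → ℝ} {K : ℕ → ℝ}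

lemma hK_nonneg (hK0 : 0 ≤ K 0) (hKmono : StrictMono K) (n : ℕ) : 0 ≤ K n :=
  le_trans hK0 (hKmono.monotone (Nat.zero_le n))

lemma sl_mono (hgc : ConvexOn ℝ (Set.Ici (0:ℝ)) gbar) (hK0 : 0 ≤ K 0)
    (hKmono : StrictMono K) : Monotone (sl gbar K) := by
  refine monotone_nat_of_le_succ fun n => ?_
  exact hgc.slope_mono_adjacent (Set.mem_Ici.2 (hK_nonneg hK0 hKmono n))
    (Set.mem_Ici.2 (hK_nonneg hK0 hKmono (n+2)))
    (hKmono (Nat.lt_succ_self n)) (hKmono (Nat.lt_succ_self (n+1)))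

lemma Aseq_mono (hgc : ConvexOn ℝ (Set.Ici (0:ℝ)) gbar) (hK0 : 0 ≤ K 0)
    (hKmono : StrictMono K) : Monotone (Aseq gbar K) :=
  fun a b h => max_le_max (sl_mono hgc hK0 hKmono h) le_rfl

lemma alph_nonneg (hgc : ConvexOn ℝ (Set.Ici (0:ℝ)) gbar) (hK0 : 0 ≤ K 0)
    (hKmono : StrictMono K) (n : ℕ) : 0 ≤ alph gbar K n := by
  cases n with
  | zero => exact le_max_right _ _
  | succ m => exact sub_nonneg.2 (Aseq_mono hgc hK0 hKmono (Nat.le_succ m))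

lemma sum_alph (N : ℕ) : ∑ n ∈ Finset.range (N+1), alph gbar K n = Aseq gbar K N := by
  induction N with
  | zero => simp [alph]
  | succ m ih => rw [Finset.sum_range_succ, ih]; show _ + (Aseq gbar K (m+1) - _) = _; ring

end Defs


lemma main_construction (ν : Measure ℝ) [IsProbabilityMeasure ν]
    (hsupp : ν (Set.Iio 0) = 0) (hmom : Integrable (fun y => y) ν)
    (gbar : ℝ → ℝ) (hgc : ConvexOn ℝ (Set.Ici (0:ℝ)) gbar)
    (hgs : Tendsto (fun y => gbar y / y) atTop atTop)
    (K : ℕ → ℝ) (hK0 : 0 ≤ K 0) (hKmono : StrictMono K) (hKtend : Tendsto K atTop atTop)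
    (c₀ : ℝ) (hbase : ∀ y, 0 ≤ y → y ≤ K 0 → gbar y ≤ c₀)
    (hsum : Summable (fun n => alph gbar K n * price ν (K n))) :
    ∃ (c : ℝ) (α K : ℕ → ℝ),
      (∀ n, 0 ≤ α n) ∧ StrictMono K ∧ Tendsto K atTop atTop ∧
      ¬ Summable α ∧
      Summable (fun n => α n * ∫ y, max (y - K n) 0 ∂ν) ∧
      ConvexOn ℝ (Set.Ici (0:ℝ))
        (fun y => ∑' n, α n * (max (y - K n) 0 - ∫ z, max (z - K n) 0 ∂ν)) ∧
      Tendsto (fun y =>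
          (∑' n, α n * (max (y - K n) 0 - ∫ z, max (z - K n) 0 ∂ν)) / y) atTop atTop ∧
      Integrable (fun y => ∑' n, α n * (max (y - K n) 0 - ∫ z, max (z - K n) 0 ∂ν)) ν ∧
      ∀ y : ℝ, 0 ≤ y → gbar y ≤ c + ∑' n, α n * max (y - K n) 0 := by
  set α := alph gbar K with hα
  have hαn : ∀ n, 0 ≤ α n := alph_nonneg hgc hK0 hKmono
  have hKn : ∀ n, 0 ≤ K n := hK_nonneg hK0 hKmono
  have hpn : ∀ n, 0 ≤ price ν (K n) := fun n => price_nonneg _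
  -- summability of the call payoffs at a fixed point
  have hcal : ∀ y : ℝ, Summable (fun n => α n * max (y - K n) 0) := by
    intro y
    obtain ⟨N, hN⟩ := eventually_atTop.1 (hKtend.eventually_ge_atTop y)
    refine summable_of_ne_finset_zero (s := Finset.range N) fun n hn => ?_
    have hyn : y ≤ K n := hN n (Nat.le_of_not_lt fun h => hn (Finset.mem_range.2 h))
    simp [max_eq_right (by linarith : y - K n ≤ 0)]
  set S := ∑' n, α n * price ν (K n) with hSdef
  have hSnn : 0 ≤ S := tsum_nonneg fun n => mul_nonneg (hαn n) (hpn n)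
  have hg0eq : ∀ y : ℝ, (∑' n, α n * (max (y - K n) 0 - price ν (K n))) =
      (∑' n, α n * max (y - K n) 0) - S := by
    intro y
    rw [hSdef, ← Summable.tsum_sub (hcal y) hsum]
    exact tsum_congr fun n => mul_sub _ _ _
  -- key finite domination
  have hkey : ∀ N, ∀ y, 0 ≤ y → y ≤ K N →
      gbar y ≤ c₀ + ∑ n ∈ Finset.range N, α n * max (y - K n) 0 := by
    intro N
    induction N with
    | zero => intro y hy hyK; simpa using hbase y hy hyK
    | succ N ih =>
      intro y hy hyK
      by_cases hcase : y ≤ K N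
      · have h1 := ih y hy hcase
        have h2 : 0 ≤ α N * max (y - K N) 0 := mul_nonneg (hαn N) (le_max_right _ _)
        rw [Finset.sum_range_succ]; linarith
      · push_neg at hcase
        have hKlt : K N < K (N+1) := hKmono (Nat.lt_succ_self N)
        have h1 : gbar y ≤ gbar (K N) + sl gbar K N * (y - K N) :=
          chord_bound hgc (hKn N) hcase.le hyK hKlt
        have h2 : gbar (K N) ≤ c₀ + ∑ n ∈ Finset.range N, α n * max (K N - K n) 0 :=
          ih (K N) (hKn N) le_rfl
        have h3 : sl gbar K N ≤ Aseq gbar K N := le_max_left _ _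
        have e1 : ∀ n ∈ Finset.range (N+1), α n * max (y - K n) 0
            = α n * max (K N - K n) 0 + α n * (y - K N) := by
          intro n hn
          have hnN : n ≤ N := Nat.lt_succ_iff.1 (Finset.mem_range.1 hn)
          have hKnN : K n ≤ K N := hKmono.monotone hnN
          rw [max_eq_left (by linarith), max_eq_left (by linarith)]
          ring
        have hA : ∑ n ∈ Finset.range (N+1), α n * (y - K N)
            = Aseq gbar K N * (y - K N) := by rw [← Finset.sum_mul, sum_alph]
        have hB : ∑ n ∈ Finset.range (N+1), α n * max (K N - K n) 0
            = ∑ n ∈ Finset.range N, α n * max (K N - K n) 0 := by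
          rw [Finset.sum_range_succ]; simp
        have h4 : ∑ n ∈ Finset.range (N+1), α n * max (y - K n) 0
            = (∑ n ∈ Finset.range N, α n * max (K N - K n) 0)
              + Aseq gbar K N * (y - K N) := by
          rw [Finset.sum_congr rfl e1, Finset.sum_add_distrib, hA, hB]
        have h5 : sl gbar K N * (y - K N) ≤ Aseq gbar K N * (y - K N) :=
          mul_le_mul_of_nonneg_right h3 (by linarith)
        rw [h4]; linarith
  -- full domination
  have hdom : ∀ y, 0 ≤ y → gbar y ≤ c₀ + ∑' n, α n * max (y - K n) 0 := by
    intro y hy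
    obtain ⟨N, hN⟩ := eventually_atTop.1 (hKtend.eventually_ge_atTop y)
    have heq : (∑' n, α n * max (y - K n) 0)
        = ∑ n ∈ Finset.range N, α n * max (y - K n) 0 := by
      refine tsum_eq_sum fun n hn => ?_
      have hyn : y ≤ K n := hN n (Nat.le_of_not_lt fun h => hn (Finset.mem_range.2 h))
      simp [max_eq_right (by linarith : y - K n ≤ 0)]
    rw [heq]; exact hkey N y hy (hN N le_rfl)
  -- tendsto of the A sequence
  have hslope_tend : Tendsto (fun y => (gbar y - gbar (K 0)) / (y - K 0)) atTop atTop := by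
    have hC : Tendsto (fun y : ℝ => gbar (K 0) / y) atTop (nhds 0) :=
      Tendsto.div_atTop tendsto_const_nhds tendsto_id
    have T1 : Tendsto (fun y => gbar y / y - gbar (K 0) / y) atTop atTop := by
      have := hgs.atTop_add (hC.neg)
      simpa [sub_eq_add_neg] using this
    refine tendsto_atTop_mono' atTop ?_ T1
    filter_upwards [hgs.eventually_ge_atTop (|gbar (K 0)| + 1),
      eventually_ge_atTop (max 1 (K 0 + 1))] with y h1 h2
    have hy1 : (1:ℝ) ≤ y := le_trans (le_max_left _ _) h2
    have hyK : K 0 + 1 ≤ y := le_trans (le_max_right _ _) h2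
    have hy0 : (0:ℝ) < y := by linarith
    have hnum : 0 ≤ gbar y - gbar (K 0) := by
      have : (|gbar (K 0)| + 1) * y ≤ gbar y := by
        calc (|gbar (K 0)| + 1) * y ≤ (gbar y / y) * y :=
              mul_le_mul_of_nonneg_right h1 hy0.le
          _ = gbar y := by field_simp
      have h3 : |gbar (K 0)| + 1 ≤ (|gbar (K 0)| + 1) * y := by
        nlinarith [abs_nonneg (gbar (K 0))]
      have h4 : gbar (K 0) ≤ |gbar (K 0)| := le_abs_self _
      linarith
    calc gbar y / y - gbar (K 0) / y = (gbar y - gbar (K 0)) / y := (sub_div _ _ _).symm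
      _ ≤ (gbar y - gbar (K 0)) / (y - K 0) :=
          div_le_div_of_nonneg_left hnum (by linarith) (by linarith)
  have hAtend : Tendsto (fun N => Aseq gbar K N) atTop atTop := by
    have T4 : Tendsto (fun N => (gbar (K (N+1)) - gbar (K 0)) / (K (N+1) - K 0))
        atTop atTop := hslope_tend.comp (hKtend.comp (tendsto_add_atTop_nat 1))
    refine tendsto_atTop_mono' atTop ?_ T4
    filter_upwards [eventually_ge_atTop 1] with N hN1
    have hK0N : K 0 < K N := hKmono (by omega)
    have hKN1 : K N < K (N+1) := hKmono (Nat.lt_succ_self N)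
    have := slope_right_le hgc (hKn 0) hK0N hKN1
    exact le_trans this (le_max_left _ _)
  have hnots : ¬ Summable α := by
    intro hs
    have hbdd : ∀ N, Aseq gbar K N ≤ ∑' n, α n := by
      intro N; rw [← sum_alph]
      exact Summable.sum_le_tsum _ (fun n _ => hαn n) hs
    obtain ⟨N, hN⟩ := (hAtend.eventually_gt_atTop (∑' n, α n)).exists
    exact absurd (hbdd N) (not_le.2 hN)
  -- convexity
  have hconv : ConvexOn ℝ (Set.Ici (0:ℝ))
      (fun y => ∑' n, α n * (max (y - K n) 0 - price ν (K n))) := by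
    refine ⟨convex_Ici 0, fun x hx y hy a b ha hb hab => ?_⟩
    simp only [smul_eq_mul, hg0eq]
    have hzx : a * x + b * y ≤ max x y := by
      calc a * x + b * y ≤ a * max x y + b * max x y :=
            add_le_add (mul_le_mul_of_nonneg_left (le_max_left _ _) ha)
              (mul_le_mul_of_nonneg_left (le_max_right _ _) hb)
        _ = max x y := by rw [← add_mul, hab, one_mul]
    obtain ⟨N, hN⟩ := eventually_atTop.1 (hKtend.eventually_ge_atTop (max x y))
    have hts : ∀ z : ℝ, z ≤ max x y → (∑' n, α n * max (z - K n) 0)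
        = ∑ n ∈ Finset.range N, α n * max (z - K n) 0 := by
      intro z hz
      refine tsum_eq_sum fun n hn => ?_
      have : max x y ≤ K n := hN n (Nat.le_of_not_lt fun h => hn (Finset.mem_range.2 h))
      simp [max_eq_right (by linarith : z - K n ≤ 0)]
    rw [hts _ hzx, hts x (le_max_left _ _), hts y (le_max_right _ _)]
    have hsum_le : ∑ n ∈ Finset.range N, α n * max (a * x + b * y - K n) 0
        ≤ a * (∑ n ∈ Finset.range N, α n * max (x - K n) 0)
          + b * (∑ n ∈ Finset.range N, α n * max (y - K n) 0) := by
      rw [Finset.mul_sum, Finset.mul_sum, ← Finset.sum_add_distrib]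
      refine Finset.sum_le_sum fun n _ => ?_
      have hinner : max (a * x + b * y - K n) 0
          ≤ a * max (x - K n) 0 + b * max (y - K n) 0 := by
        refine max_le ?_ ?_
        · have : a * x + b * y - K n = a * (x - K n) + b * (y - K n) := by
            linear_combination (K n) * hab
          rw [this]
          exact add_le_add (mul_le_mul_of_nonneg_left (le_max_left _ _) ha)
            (mul_le_mul_of_nonneg_left (le_max_left _ _) hb)
        · exact add_nonneg (mul_nonneg ha (le_max_right _ _))
            (mul_nonneg hb (le_max_right _ _))
      calc α n * max (a * x + b * y - K n) 0 ≤ α n * (a * max (x - K n) 0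
            + b * max (y - K n) 0) := mul_le_mul_of_nonneg_left hinner (hαn n)
        _ = a * (α n * max (x - K n) 0) + b * (α n * max (y - K n) 0) := by ring
    have hSab : a * S + b * S = S := by rw [← add_mul, hab, one_mul]
    linarith
  -- superlinearity
  have hsup : Tendsto (fun y =>
      (∑' n, α n * (max (y - K n) 0 - price ν (K n))) / y) atTop atTop := by
    have hC : Tendsto (fun y : ℝ => (c₀ + S) / y) atTop (nhds 0) :=
      Tendsto.div_atTop tendsto_const_nhds tendsto_id
    have T1 : Tendsto (fun y => gbar y / y - (c₀ + S) / y) atTop atTop := by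
      have := hgs.atTop_add (hC.neg)
      simpa [sub_eq_add_neg] using this
    refine tendsto_atTop_mono' atTop ?_ T1
    filter_upwards [eventually_ge_atTop (1:ℝ)] with y hy1
    have hy0 : (0:ℝ) < y := by linarith
    have hlow : gbar y - (c₀ + S) ≤ ∑' n, α n * (max (y - K n) 0 - price ν (K n)) := by
      rw [hg0eq]
      have := hdom y (by linarith)
      linarith
    calc gbar y / y - (c₀ + S) / y = (gbar y - (c₀ + S)) / y := (sub_div _ _ _).symm
      _ ≤ _ := by gcongr
  -- integrability
  have hint_call : ∀ n, Integrable (fun y => α n * max (y - K n) 0) ν :=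
    fun n => (call_integrable hmom (K n)).const_mul _
  have hTCnn : ∀ y, 0 ≤ ∑' n, α n * max (y - K n) 0 :=
    fun y => tsum_nonneg fun n => mul_nonneg (hαn n) (le_max_right _ _)
  have hTCmono : Monotone (fun y => ∑' n, α n * max (y - K n) 0) := by
    intro y1 y2 h
    exact Summable.tsum_le_tsum (fun n => mul_le_mul_of_nonneg_left
      (max_le_max (by linarith) le_rfl) (hαn n)) (hcal y1) (hcal y2)
  have hTCint : Integrable (fun y => ∑' n, α n * max (y - K n) 0) ν := by
    refine ⟨(hTCmono.measurable).aestronglyMeasurable, ?_⟩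
    rw [hasFiniteIntegral_iff_norm]
    have hptw : ∀ y, ENNReal.ofReal ‖∑' n, α n * max (y - K n) 0‖
        = ∑' n, ENNReal.ofReal (α n * max (y - K n) 0) := by
      intro y
      rw [Real.norm_of_nonneg (hTCnn y)]
      exact ENNReal.ofReal_tsum_of_nonneg
        (fun n => mul_nonneg (hαn n) (le_max_right _ _)) (hcal y)
    calc ∫⁻ y, ENNReal.ofReal ‖∑' n, α n * max (y - K n) 0‖ ∂ν
        = ∫⁻ y, ∑' n, ENNReal.ofReal (α n * max (y - K n) 0) ∂ν := by
          exact lintegral_congr fun y => hptw y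
      _ = ∑' n, ∫⁻ y, ENNReal.ofReal (α n * max (y - K n) 0) ∂ν := by
          refine lintegral_tsum fun n => ?_
          exact (((measurable_id.sub measurable_const).max measurable_const).const_mul
            (α n)).ennreal_ofReal.aemeasurable
      _ = ∑' n, ENNReal.ofReal (α n * price ν (K n)) := by
          refine tsum_congr fun n => ?_
          rw [← ofReal_integral_eq_lintegral_ofReal (hint_call n)
            (Eventually.of_forall fun y => mul_nonneg (hαn n) (le_max_right _ _))]
          rw [integral_const_mul]
          rfl
      _ = ENNReal.ofReal S := by
          rw [hSdef]
          exact (ENNReal.ofReal_tsum_of_nonneg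
            (fun n => mul_nonneg (hαn n) (hpn n)) hsum).symm
      _ < ⊤ := ENNReal.ofReal_lt_top
  have hg0fun : (fun y => ∑' n, α n * (max (y - K n) 0 - price ν (K n)))
      = fun y => (∑' n, α n * max (y - K n) 0) - S := funext hg0eq
  have hg0int : Integrable (fun y => ∑' n, α n * (max (y - K n) 0 - price ν (K n))) ν := by
    rw [hg0fun]; exact hTCint.sub (integrable_const S)
  exact ⟨c₀, α, K, hαn, hKmono, hKtend, hnots, hsum, hconv, hsup, hg0int, hdom⟩
lemma summable_regime1 (ν : Measure ℝ) [IsProbabilityMeasure ν]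
    (hsupp : ν (Set.Iio 0) = 0) (hmom : Integrable (fun y => y) ν)
    (gbar : ℝ → ℝ) (hgc : ConvexOn ℝ (Set.Ici (0:ℝ)) gbar) (hgi : Integrable gbar ν)
    (K : ℕ → ℝ) (hK0 : K 0 = 0) (hKmono : StrictMono K) (hKtend : Tendsto K atTop atTop)
    (hhalf : ∀ n, price ν (K n) = 2 * price ν (K (n+1))) :
    Summable (fun n => alph gbar K n * price ν (K n)) := by
  have hK0' : (0:ℝ) ≤ K 0 := le_of_eq hK0.symm
  have hαn : ∀ n, 0 ≤ alph gbar K n := alph_nonneg hgc hK0' hKmono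
  have hKn : ∀ n, 0 ≤ K n := hK_nonneg hK0' hKmono
  set s0 := sl gbar K 0 with hs0
  set σ := max s0 0 with hσ
  set G : ℝ → ℝ := fun y => max (gbar y - gbar (K 0) - s0 * y) 0 + σ * y with hG
  have hGint : Integrable G ν := by
    refine Integrable.add ?_ (hmom.const_mul σ)
    exact ((hgi.sub (integrable_const (gbar (K 0)))).sub (hmom.const_mul s0)).pos_part
  have hGnn : ∀ y, 0 ≤ y → 0 ≤ G y := fun y hy =>
    add_nonneg (le_max_right _ _) (mul_nonneg (le_max_right _ _) hy)
  -- b_m ≥ 0 : gbar (K (m+1)) - gbar (K 0) - s0 * K (m+1) ≥ 0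
  have hs0' : s0 = (gbar (K 1) - gbar (K 0)) / (K 1 - K 0) := rfl
  have hb : ∀ m, 0 ≤ gbar (K (m+1)) - gbar (K 0) - s0 * K (m+1) := by
    intro m
    have h01 : K 0 < K 1 := hKmono Nat.zero_lt_one
    rcases Nat.eq_zero_or_pos m with rfl | hm
    · have h1 : s0 * (K 1 - K 0) = gbar (K 1) - gbar (K 0) := by
        rw [hs0']; exact div_mul_cancel₀ _ (by linarith)
      rw [hK0] at h1 ⊢
      rw [sub_zero] at h1
      linarith
    · have h1m : K 1 < K (m+1) := hKmono (by omega)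
      have hsl := slope_left_le hgc hK0' h01 h1m
      rw [← hs0'] at hsl
      have hpos : (0:ℝ) < K (m+1) - K 0 := by linarith
      have h2 : s0 * (K (m+1) - K 0) ≤ gbar (K (m+1)) - gbar (K 0) :=
        (le_div_iff₀ hpos).1 hsl
      rw [hK0] at h2 ⊢
      rw [sub_zero] at h2
      linarith
  -- the induction bound
  have hR : ∀ m, ∀ y, 0 ≤ y → y ≤ K (m+1) →
      (∑ n ∈ Finset.range m, alph gbar K n * max (y - K (n+1)) 0) ≤ G y := by
    intro m
    induction m with
    | zero => intro y hy _; simpa using hGnn y hy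
    | succ m ih =>
      intro y hy hyK
      by_cases hcase : y ≤ K (m+1)
      · rw [Finset.sum_range_succ,
          max_eq_right (by linarith : y - K (m+1) ≤ 0), mul_zero, add_zero]
        exact ih y hy hcase
      · push_neg at hcase
        have hKm2 : K (m+1) < K (m+2) := hKmono (Nat.lt_succ_self (m+1))
        have hKm1 : K m < K (m+1) := hKmono (Nat.lt_succ_self m)
        -- linear identity for the sum
        have e1 : ∀ n ∈ Finset.range (m+1), alph gbar K n * max (y - K (n+1)) 0
            = alph gbar K n * max (K (m+1) - K (n+1)) 0 + alph gbar K n * (y - K (m+1)) := by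
          intro n hn
          have hnm : n ≤ m := Nat.lt_succ_iff.1 (Finset.mem_range.1 hn)
          have h1 : K (n+1) ≤ K (m+1) := hKmono.monotone (by omega)
          rw [max_eq_left (by linarith), max_eq_left (by linarith)]
          ring
        have hA : ∑ n ∈ Finset.range (m+1), alph gbar K n * (y - K (m+1))
            = Aseq gbar K m * (y - K (m+1)) := by rw [← Finset.sum_mul, sum_alph]
        have hsum_id : ∑ n ∈ Finset.range (m+1), alph gbar K n * max (y - K (n+1)) 0
            = (∑ n ∈ Finset.range (m+1), alph gbar K n * max (K (m+1) - K (n+1)) 0)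
              + Aseq gbar K m * (y - K (m+1)) := by
          rw [Finset.sum_congr rfl e1, Finset.sum_add_distrib, hA]
        have hHK : (∑ n ∈ Finset.range (m+1), alph gbar K n * max (K (m+1) - K (n+1)) 0)
            ≤ G (K (m+1)) := by
          rw [Finset.sum_range_succ, max_eq_right (by simp), mul_zero, add_zero]
          exact ih (K (m+1)) (hKn (m+1)) le_rfl
        -- the slope step
        have hchord : sl gbar K m * (y - K (m+1)) ≤ gbar y - gbar (K (m+1)) := by
          have hslm : sl gbar K m
              = (gbar (K (m+1)) - gbar (K m)) / (K (m+1) - K m) := rfl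
          have h := hgc.slope_mono_adjacent (Set.mem_Ici.2 (hKn m))
            (Set.mem_Ici.2 (by linarith : (0:ℝ) ≤ y)) hKm1 hcase
          rw [div_le_div_iff₀ (by linarith) (by linarith)] at h
          rw [hslm, div_mul_eq_mul_div, div_le_iff₀ (by linarith : (0:ℝ) < K (m+1) - K m)]
          nlinarith [h]
        have hs0m : s0 ≤ sl gbar K m := sl_mono hgc hK0' hKmono (Nat.zero_le m)
        have hAm : Aseq gbar K m ≤ sl gbar K m - s0 + σ := by
          have hAseq : Aseq gbar K m = max (sl gbar K m) 0 := rfl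
          rcases le_or_gt (sl gbar K m) 0 with h | h
          · rw [hAseq, max_eq_right h, hσ]; have := le_max_right s0 (0:ℝ); linarith
          · rw [hAseq, max_eq_left h.le, hσ]; have := le_max_left s0 (0:ℝ); linarith
        have hGstep : Aseq gbar K m * (y - K (m+1)) ≤ G y - G (K (m+1)) := by
          have hbm := hb m
          have ha' : gbar y - gbar (K 0) - s0 * y
              ≥ (gbar (K (m+1)) - gbar (K 0) - s0 * K (m+1))
                + (sl gbar K m - s0) * (y - K (m+1)) := by nlinarith [hchord]
          have hmax1 : max (gbar y - gbar (K 0) - s0 * y) 0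
              ≥ gbar y - gbar (K 0) - s0 * y := le_max_left _ _
          have hmax2 : max (gbar (K (m+1)) - gbar (K 0) - s0 * K (m+1)) 0
              = gbar (K (m+1)) - gbar (K 0) - s0 * K (m+1) := max_eq_left hbm
          have hAm' : Aseq gbar K m * (y - K (m+1))
              ≤ (sl gbar K m - s0 + σ) * (y - K (m+1)) :=
            mul_le_mul_of_nonneg_right hAm (by linarith)
          simp only [hG]
          rw [hmax2]
          nlinarith [hAm', ha', hmax1]
        rw [hsum_id]
        have hfin := add_le_add hHK hGstep
        linarith
  -- uniform bound for all partial sums, all y ≥ 0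
  have hHbound : ∀ N, ∀ y, 0 ≤ y →
      (∑ n ∈ Finset.range N, alph gbar K n * max (y - K (n+1)) 0) ≤ G y := by
    intro N y hy
    obtain ⟨M, hM⟩ := eventually_atTop.1 (hKtend.eventually_ge_atTop y)
    set m := max N M with hm
    have h1 : (∑ n ∈ Finset.range N, alph gbar K n * max (y - K (n+1)) 0)
        ≤ ∑ n ∈ Finset.range m, alph gbar K n * max (y - K (n+1)) 0 := by
      refine Finset.sum_le_sum_of_subset_of_nonneg
        (Finset.range_subset_range.2 (le_max_left _ _)) fun n _ _ =>
        mul_nonneg (hαn n) (le_max_right _ _)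
    refine le_trans h1 (hR m y hy ?_)
    have : y ≤ K m := hM m (le_max_right _ _)
    have : K m ≤ K (m+1) := (hKmono (Nat.lt_succ_self m)).le
    linarith [hM m (le_max_right N M)]
  -- partial sums of the target are bounded
  have hae : ∀ᵐ y ∂ν, (0:ℝ) ≤ y := by
    rw [ae_iff]
    convert hsupp using 2
    ext y; simp [not_le, Set.mem_Iio]
  have hint_call : ∀ n, Integrable (fun y => alph gbar K n * max (y - K (n+1)) 0) ν :=
    fun n => (call_integrable hmom (K (n+1))).const_mul _
  refine summable_of_sum_range_le (c := 2 * ∫ y, G y ∂ν)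
    (fun n => mul_nonneg (hαn n) (price_nonneg _)) fun N => ?_
  have h1 : ∑ n ∈ Finset.range N, alph gbar K n * price ν (K n)
      = 2 * ∑ n ∈ Finset.range N, alph gbar K n * price ν (K (n+1)) := by
    rw [Finset.mul_sum]
    refine Finset.sum_congr rfl fun n _ => ?_
    rw [hhalf n]; ring
  have h2 : ∑ n ∈ Finset.range N, alph gbar K n * price ν (K (n+1))
      = ∫ y, (∑ n ∈ Finset.range N, alph gbar K n * max (y - K (n+1)) 0) ∂ν := by
    rw [integral_finset_sum _ fun n _ => hint_call n]
    exact Finset.sum_congr rfl fun n _ => by rw [integral_const_mul]; rfl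
  have h3 : ∫ y, (∑ n ∈ Finset.range N, alph gbar K n * max (y - K (n+1)) 0) ∂ν
      ≤ ∫ y, G y ∂ν := by
    refine integral_mono_ae (integrable_finset_sum _ fun n _ => hint_call n) hGint ?_
    filter_upwards [hae] with y hy
    exact hHbound N y hy
  rw [h1, h2]
  linarith [h3]
lemma grid_step (ν : Measure ℝ) [IsProbabilityMeasure ν]
    (hmom : Integrable (fun y => y) ν) (hpos : ∀ k, 0 ≤ k → 0 < price ν k)
    {x : ℝ} (hx : 0 ≤ x) :
    x < sInf {k | price ν k ≤ price ν x / 2} ∧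
    price ν (sInf {k | price ν k ≤ price ν x / 2}) = price ν x / 2 := by
  set S := {k | price ν k ≤ price ν x / 2} with hS
  have hpx : 0 < price ν x := hpos x hx
  have hne : S.Nonempty := by
    obtain ⟨k, hk⟩ := ((price_tendsto_zero hmom).eventually_lt_const (half_pos hpx)).exists
    exact ⟨k, hk.le⟩
  have hlb : ∀ k ∈ S, x < k := by
    intro k hk
    by_contra h
    push_neg at h
    have h1 := price_antitone hmom h
    have h2 : price ν x ≤ price ν x / 2 := le_trans h1 hk
    linarith
  have hbdd : BddBelow S := ⟨x, fun k hk => (hlb k hk).le⟩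
  have hcl : IsClosed S := IsClosed.preimage (price_continuous hmom) isClosed_Iic
  have hmem : sInf S ∈ S := hcl.csInf_mem hne hbdd
  refine ⟨hlb _ hmem, le_antisymm hmem ?_⟩
  by_contra hlt
  push_neg at hlt
  have ho : IsOpen {k | price ν k < price ν x / 2} :=
    isOpen_lt (price_continuous hmom) continuous_const
  obtain ⟨ε, hε, hball⟩ := Metric.isOpen_iff.1 ho _ hlt
  have hmem2 : sInf S - ε/2 ∈ S := by
    have : sInf S - ε/2 ∈ Metric.ball (sInf S) ε := by
      simp only [Metric.mem_ball, Real.dist_eq]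
      rw [abs_of_nonpos (by linarith)]
      linarith
    have h6 : price ν (sInf S - ε/2) < price ν x / 2 := hball this
    exact le_of_lt h6
  have := csInf_le hbdd hmem2
  linarith

theorem stmt11 (ν : Measure ℝ) [IsProbabilityMeasure ν] (hsupp : ν (Set.Iio 0) = 0)
    (hmom : Integrable (fun y => y) ν)
    (gbar : ℝ → ℝ) (hgc : ConvexOn ℝ (Set.Ici (0:ℝ)) gbar)
    (hgs : Tendsto (fun y => gbar y / y) atTop atTop)
    (hgi : Integrable gbar ν) :
    ∃ (c : ℝ) (α K : ℕ → ℝ),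
      (∀ n, 0 ≤ α n) ∧ StrictMono K ∧ Tendsto K atTop atTop ∧
      ¬ Summable α ∧
      Summable (fun n => α n * ∫ y, max (y - K n) 0 ∂ν) ∧
      ConvexOn ℝ (Set.Ici (0:ℝ))
        (fun y => ∑' n, α n * (max (y - K n) 0 - ∫ z, max (z - K n) 0 ∂ν)) ∧
      Tendsto (fun y =>
          (∑' n, α n * (max (y - K n) 0 - ∫ z, max (z - K n) 0 ∂ν)) / y) atTop atTop ∧
      Integrable (fun y => ∑' n, α n * (max (y - K n) 0 - ∫ z, max (z - K n) 0 ∂ν)) ν ∧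
      ∀ y : ℝ, 0 ≤ y → gbar y ≤ c + ∑' n, α n * max (y - K n) 0 := by
  by_cases hex : ∃ M, 0 ≤ M ∧ price ν M ≤ 0
  · -- compactly supported case : all prices beyond M vanish
    obtain ⟨M, hM0, hMp⟩ := hex
    set K : ℕ → ℝ := fun n => M + n with hK
    have hK0 : K 0 = M := by simp [hK]
    have hKmono : StrictMono K := by
      intro a b h
      simp only [hK, add_lt_add_iff_left, Nat.cast_lt]
      exact h
    have hKtend : Tendsto K atTop atTop :=
      tendsto_atTop_add_const_left _ M tendsto_natCast_atTop_atTop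
    have hpz : ∀ n, price ν (K n) = 0 := by
      intro n
      refine le_antisymm (le_trans (price_antitone hmom ?_) hMp) (price_nonneg _)
      simp [hK]
    have hsum : Summable (fun n => alph gbar K n * price ν (K n)) := by
      refine summable_zero.congr fun n => ?_
      rw [hpz n, mul_zero]
    have hbase : ∀ y, 0 ≤ y → y ≤ K 0 → gbar y ≤ max (gbar 0) (gbar M) := by
      intro y hy hyK
      rw [hK0] at hyK
      rcases eq_or_lt_of_le hM0 with hM0' | hM0'
      · have hy0 : y = 0 := le_antisymm (by linarith [hyK]) hy
        rw [hy0]; exact le_max_left _ _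
      · have hMne : M ≠ 0 := ne_of_gt hM0'
        have ha : 0 ≤ (M - y)/M := div_nonneg (by linarith) hM0'.le
        have hb : 0 ≤ y/M := div_nonneg hy hM0'.le
        have hab : (M - y)/M + y/M = 1 := by field_simp; ring
        have h := hgc.2 (Set.mem_Ici.2 (le_refl (0:ℝ))) (Set.mem_Ici.2 hM0'.le) ha hb hab
        simp only [smul_eq_mul, mul_zero, zero_add] at h
        rw [div_mul_cancel₀ _ hMne] at h
        have h1 : gbar 0 ≤ max (gbar 0) (gbar M) := le_max_left _ _
        have h2 : gbar M ≤ max (gbar 0) (gbar M) := le_max_right _ _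
        have h3 : (M - y)/M * gbar 0 ≤ (M - y)/M * (max (gbar 0) (gbar M)) :=
          mul_le_mul_of_nonneg_left h1 ha
        have h4 : y/M * gbar M ≤ y/M * (max (gbar 0) (gbar M)) :=
          mul_le_mul_of_nonneg_left h2 hb
        have h5 : (M - y)/M * (max (gbar 0) (gbar M)) + y/M * (max (gbar 0) (gbar M))
            = max (gbar 0) (gbar M) := by rw [← add_mul, hab, one_mul]
        linarith [h, h3, h4, h5]
    exact main_construction ν hsupp hmom gbar hgc hgs K (hK0 ▸ hM0) hKmono hKtend _ hbase hsum
  · push_neg at hex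
    have hpos : ∀ k, 0 ≤ k → 0 < price ν k := hex
    set K : ℕ → ℝ := fun n =>
      Nat.rec 0 (fun _ k => sInf {j | price ν j ≤ price ν k / 2}) n with hKdef
    have hK0 : K 0 = 0 := rfl
    have hKnn : ∀ n, 0 ≤ K n := by
      intro n
      induction n with
      | zero => exact le_of_eq hK0.symm
      | succ n ih =>
        have := (grid_step ν hmom hpos ih).1
        exact le_trans ih this.le
    have hlt : ∀ n, K n < K (n+1) := fun n => (grid_step ν hmom hpos (hKnn n)).1
    have hhalfeq : ∀ n, price ν (K (n+1)) = price ν (K n) / 2 :=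
      fun n => (grid_step ν hmom hpos (hKnn n)).2
    have hhalf : ∀ n, price ν (K n) = 2 * price ν (K (n+1)) := by
      intro n; rw [hhalfeq n]; ring
    have hKmono : StrictMono K := strictMono_nat_of_lt_succ hlt
    have hpow : ∀ n, price ν (K n) = price ν (K 0) / 2^n := by
      intro n
      induction n with
      | zero => simp
      | succ n ih => rw [hhalfeq n, ih, pow_succ]; ring
    have hKtend : Tendsto K atTop atTop := by
      by_cases hbdd : BddAbove (Set.range K)
      · exfalso
        set X := ⨆ n, K n with hX
        have hle : ∀ n, K n ≤ X := fun n => le_ciSup hbdd n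
        have hX0 : 0 ≤ X := le_trans (hKnn 0) (hle 0)
        have hpX : 0 < price ν X := hpos X hX0
        have h1 : ∀ n : ℕ, price ν X ≤ price ν (K 0) / 2^n := fun n => by
          rw [← hpow n]; exact price_antitone hmom (hle n)
        have h2 : Tendsto (fun n : ℕ => price ν (K 0) / 2^n) atTop (nhds 0) := by
          have h3 : Tendsto (fun n : ℕ => ((1:ℝ)/2)^n) atTop (nhds 0) :=
            tendsto_pow_atTop_nhds_zero_of_lt_one (by norm_num) (by norm_num)
          have h4 := h3.const_mul (price ν (K 0))
          rw [mul_zero] at h4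
          refine h4.congr fun n => ?_
          rw [div_pow, one_pow, mul_one_div]
        have h5 : price ν X ≤ 0 := ge_of_tendsto' h2 h1
        linarith
      · exact tendsto_atTop_atTop_of_monotone' hKmono.monotone hbdd
    have hbase : ∀ y, 0 ≤ y → y ≤ K 0 → gbar y ≤ gbar 0 := by
      intro y hy hyK
      rw [hK0] at hyK
      have : y = 0 := le_antisymm hyK hy
      rw [this]
    exact main_construction ν hsupp hmom gbar hgc hgs K (le_of_eq hK0.symm) hKmono hKtend
      (gbar 0) hbase (summable_regime1 ν hsupp hmom gbar hgc hgi K hK0 hKmono hKtend hhalf)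
end

section
/- Let T ≥ 1 and let π be a Borel probability measure on [0,∞)^T such that each coordinate x_t is π-integrable and ∫ Σ_{t=0}^{T−1} Δ_t(x₁,…,x_t)·(x_{t+1} − x_t) dπ(x) = 0 for every family of bounded continuous functions Δ_t : [0,∞)^t → ℝ (with x₀ := S₀ a fixed constant). Then the canonical process (x_t)_{t=1}^T is a martingale under π with respect to its natural filtration. Conversely, every such martingale measure with integrable coordinates satisfies these integral conditions. -/
open MeasureTheory
open scoped ENNReal NNReal BoundedContinuousFunction

/-- The natural filtration of the canonical process on path space `Fin T → ℝ`. -/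
def natFiltration (T : ℕ) :
    Filtration (Fin T) (inferInstance : MeasurableSpace (Fin T → ℝ)) where
  seq t := ⨆ (s : Fin T) (_ : s ≤ t), MeasurableSpace.comap (fun x => x s) inferInstance
  mono' _ _ hij := iSup₂_le fun s hs => le_iSup₂_of_le s (hs.trans hij) le_rfl
  le' _ := iSup₂_le fun s _ => (measurable_pi_apply s).comap_le

namespace Stmt12Aux
variable {T : ℕ}

def proj (T n : ℕ) (h : n ≤ T) : (Fin T → ℝ) → (Fin n → ℝ) := fun x i => x (Fin.castLE h i)

lemma continuous_proj (T n : ℕ) (h : n ≤ T) : Continuous (proj T n h) :=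
  continuous_pi fun _ => continuous_apply _

lemma measurable_proj (T n : ℕ) (h : n ≤ T) : Measurable (proj T n h) :=
  (continuous_proj T n h).measurable

lemma natFiltration_eq (t : Fin T) : natFiltration T t
    = ⨆ (s : Fin T) (_ : s ≤ t), MeasurableSpace.comap (fun x => x s) inferInstance := rfl

lemma filt_eq (t : Fin T) (h : (t : ℕ) + 1 ≤ T) :
    natFiltration T t
      = MeasurableSpace.comap (proj T ((t : ℕ) + 1) h) MeasurableSpace.pi := by
  have hpi : (MeasurableSpace.pi : MeasurableSpace (Fin ((t : ℕ) + 1) → ℝ)) =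
      ⨆ i : Fin ((t : ℕ) + 1), (inferInstance : MeasurableSpace ℝ).comap fun b => b i := rfl
  rw [natFiltration_eq, hpi, MeasurableSpace.comap_iSup]
  simp_rw [MeasurableSpace.comap_comp]
  apply le_antisymm
  · refine iSup₂_le fun s hs => ?_
    exact le_iSup (fun i : Fin ((t : ℕ) + 1) =>
      MeasurableSpace.comap ((fun b : Fin ((t : ℕ) + 1) → ℝ => b i) ∘ proj T _ h)
        inferInstance) ⟨(s : ℕ), Nat.lt_succ_of_le hs⟩
  · refine iSup_le fun i => ?_
    exact le_iSup₂_of_le (Fin.castLE h i) (by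
      show ((Fin.castLE h i : Fin T) : ℕ) ≤ (t : ℕ)
      simpa using Nat.lt_succ_iff.mp i.isLt) le_rfl

lemma eval_mble (t s : Fin T) (hs : s ≤ t) :
    Measurable[natFiltration T t] fun x : Fin T → ℝ => x s :=
  measurable_iff_comap_le.mpr (le_iSup₂_of_le s hs le_rfl)

lemma ofReal_max (r : ℝ) : ENNReal.ofReal r = ENNReal.ofReal (max r 0) := by
  rcases le_total r 0 with h | h
  · rw [ENNReal.ofReal_of_nonpos h, max_eq_right h, ENNReal.ofReal_zero]
  · rw [max_eq_left h]

lemma lint_conv {Ω : Type*} [MeasurableSpace Ω] (π : Measure Ω) {n : ℕ}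
    (P : Ω → (Fin n → ℝ)) (hP : Measurable P)
    (e : Ω → ℝ) (he : Measurable e) (hei : Integrable e π)
    (f : (Fin n → ℝ) →ᵇ ℝ≥0) :
    ∫⁻ y, (f y : ℝ≥0∞) ∂((π.withDensity fun x => ENNReal.ofReal (e x)).map P) =
      ENNReal.ofReal (∫ x, ((f (P x) : ℝ) * max (e x) 0) ∂π) := by
  have hfm : Measurable fun y : Fin n → ℝ => (f y : ℝ≥0∞) :=
    measurable_coe_nnreal_ennreal.comp f.continuous.measurable
  rw [lintegral_map hfm hP,
    lintegral_withDensity_eq_lintegral_mul _ he.ennreal_ofReal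
      (show Measurable fun a : Ω => (f (P a) : ℝ≥0∞) from hfm.comp hP)]
  set fR : (Fin n → ℝ) →ᵇ ℝ :=
    BoundedContinuousFunction.comp _ isometry_subtype_coe.lipschitz f with hfR
  have hint : Integrable (fun x => ((f (P x) : ℝ) * max (e x) 0)) π := by
    refine hei.pos_part.bdd_mul (c := ‖fR‖) ?_ (ae_of_all _ fun x => ?_)
    · exact (measurable_subtype_coe.comp (f.continuous.measurable.comp hP)).aestronglyMeasurable
    · exact fR.norm_coe_le_norm (P x)
  rw [ofReal_integral_eq_lintegral_ofReal hint
    (Filter.Eventually.of_forall fun x => mul_nonneg (f (P x)).coe_nonneg (le_max_right _ _))]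
  refine lintegral_congr fun x => ?_
  simp only [Pi.mul_apply]
  rw [ENNReal.ofReal_mul (f (P x)).coe_nonneg, ENNReal.ofReal_coe_nnreal, ofReal_max (e x),
    mul_comm]

lemma set_conv {Ω : Type*} [MeasurableSpace Ω] (π : Measure Ω)
    (e : Ω → ℝ) (hei : Integrable e π) {A : Set Ω} (hA : MeasurableSet A) :
    (π.withDensity fun x => ENNReal.ofReal (e x)) A =
      ENNReal.ofReal (∫ x in A, max (e x) 0 ∂π) := by
  rw [withDensity_apply _ hA,
    ofReal_integral_eq_lintegral_ofReal hei.pos_part.integrableOn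
      (Filter.Eventually.of_forall fun x => le_max_right _ _)]
  exact lintegral_congr fun x => ofReal_max (e x)

lemma heart (π : Measure (Fin T → ℝ)) [IsProbabilityMeasure π]
    (hInt : ∀ t : Fin T, Integrable (fun x => x t) π)
    (t p : Fin T) (hn : (p : ℕ) + 1 ≤ T)
    (hz : ∀ g : (Fin ((p : ℕ) + 1) → ℝ) → ℝ, Continuous g → (∃ C, ∀ b, |g b| ≤ C) →
      ∫ x, g (proj T ((p : ℕ) + 1) hn x) * (x t - x p) ∂π = 0)
    {A : Set (Fin T → ℝ)} (hA : MeasurableSet[natFiltration T p] A) :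
    ∫ x in A, x t ∂π = ∫ x in A, x p ∂π := by
  set P := proj T ((p : ℕ) + 1) hn with hP
  have hPm : Measurable P := measurable_proj T _ hn
  set d : (Fin T → ℝ) → ℝ := fun x => x t - x p with hd
  have hdm : Measurable d := (measurable_pi_apply t).sub (measurable_pi_apply p)
  have hdi : Integrable d π := (hInt t).sub (hInt p)
  have hdi' : Integrable (fun x => -(d x)) π := hdi.neg
  have hdm' : Measurable (fun x => -(d x)) := hdm.neg
  have hfin : ∀ (e : (Fin T → ℝ) → ℝ), Integrable e π →
      IsFiniteMeasure (π.withDensity fun x => ENNReal.ofReal (e x)) := by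
    intro e he
    refine isFiniteMeasure_withDensity ?_
    refine LT.lt.ne ?_
    calc ∫⁻ x, ENNReal.ofReal (e x) ∂π ≤ ∫⁻ x, ‖e x‖₊ ∂π := by
          refine lintegral_mono fun x => ?_
          rw [← enorm_eq_nnnorm, ← ofReal_norm]
          exact ENNReal.ofReal_le_ofReal (le_abs_self _)
      _ < ∞ := he.2
  haveI := hfin d hdi
  haveI := hfin (fun x => -(d x)) hdi'
  have hmeq : (π.withDensity fun x => ENNReal.ofReal (d x)).map P
      = (π.withDensity fun x => ENNReal.ofReal (-(d x))).map P := by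
    apply ext_of_forall_lintegral_eq_of_IsFiniteMeasure
    intro f
    rw [lint_conv π P hPm d hdm hdi f, lint_conv π P hPm (fun x => -(d x)) hdm' hdi' f]
    congr 1
    set fR : (Fin ((p : ℕ) + 1) → ℝ) →ᵇ ℝ :=
      BoundedContinuousFunction.comp _ isometry_subtype_coe.lipschitz f with hfR
    have h0 : ∫ x, (f (P x) : ℝ) * d x ∂π = 0 :=
      hz (fun b => (f b : ℝ)) (NNReal.continuous_coe.comp f.continuous)
        ⟨‖fR‖, fun b => by
          rw [← Real.norm_eq_abs]
          exact fR.norm_coe_le_norm b⟩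
    have hmi : ∀ (e : (Fin T → ℝ) → ℝ), Integrable e π →
        Integrable (fun x => (f (P x) : ℝ) * max (e x) 0) π := fun e he =>
      he.pos_part.bdd_mul
        ((measurable_subtype_coe.comp (f.continuous.measurable.comp hPm)).aestronglyMeasurable)
        (ae_of_all _ fun x => fR.norm_coe_le_norm (P x))
    have hps : ∫ x, ((f (P x) : ℝ) * max (d x) 0 - (f (P x) : ℝ) * max (-(d x)) 0) ∂π
        = ∫ x, (f (P x) : ℝ) * d x ∂π := by
      refine integral_congr_ae (Filter.Eventually.of_forall fun x => ?_)
      dsimp only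
      rw [← mul_sub, max_zero_sub_max_neg_zero_eq_self]
    rw [integral_sub (hmi d hdi) (hmi (fun x => -(d x)) hdi')] at hps
    have := hps.trans h0
    linarith
  rw [filt_eq p hn] at hA
  obtain ⟨B, hB, rfl⟩ := hA
  have e1 : ((π.withDensity fun x => ENNReal.ofReal (d x)).map P) B
      = ((π.withDensity fun x => ENNReal.ofReal (-(d x))).map P) B := by rw [hmeq]
  rw [Measure.map_apply hPm hB, Measure.map_apply hPm hB,
    set_conv π d hdi (hPm hB), set_conv π (fun x => -(d x)) hdi' (hPm hB)] at e1
  have e2 : ∫ x in P ⁻¹' B, max (d x) 0 ∂π = ∫ x in P ⁻¹' B, max (-(d x)) 0 ∂π := by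
    refine (ENNReal.ofReal_eq_ofReal_iff ?_ ?_).mp e1 <;>
      exact integral_nonneg fun x => le_max_right _ _
  have e3 : ∫ x in P ⁻¹' B, d x ∂π = 0 := by
    have h4 : ∫ x in P ⁻¹' B, d x ∂π
        = ∫ x in P ⁻¹' B, (max (d x) 0 - max (-(d x)) 0) ∂π := by
      refine integral_congr_ae (Filter.Eventually.of_forall fun x => ?_)
      dsimp only
      rw [max_zero_sub_max_neg_zero_eq_self]
    rw [h4, integral_sub hdi.pos_part.integrableOn hdi'.pos_part.integrableOn, e2, sub_self]
  have e6 : (∫ x in P ⁻¹' B, x t ∂π) - ∫ x in P ⁻¹' B, x p ∂π = 0 := by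
    rw [← integral_sub ((hInt t).integrableOn) ((hInt p).integrableOn)]
    exact e3
  show ∫ x in P ⁻¹' B, x t ∂π = ∫ x in P ⁻¹' B, x p ∂π
  linarith

lemma step (π : Measure (Fin T → ℝ)) [IsProbabilityMeasure π]
    (hInt : ∀ t : Fin T, Integrable (fun x => x t) π)
    (t p : Fin T) (hn : (p : ℕ) + 1 ≤ T)
    (hz : ∀ g : (Fin ((p : ℕ) + 1) → ℝ) → ℝ, Continuous g → (∃ C, ∀ b, |g b| ≤ C) →
      ∫ x, g (proj T ((p : ℕ) + 1) hn x) * (x t - x p) ∂π = 0) :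
    π[(fun x => x t) | natFiltration T p] =ᵐ[π] fun x => x p := by
  refine (ae_eq_condExp_of_forall_setIntegral_eq ((natFiltration T).le p) (hInt t)
    (fun s _ _ => (hInt p).integrableOn) (fun s hs _ => (heart π hInt t p hn hz hs).symm)
    ?_).symm
  exact (Measurable.stronglyMeasurable (eval_mble p p le_rfl)).aestronglyMeasurable

lemma mart_cond (π : Measure (Fin T → ℝ)) [IsProbabilityMeasure π]
    (hInt : ∀ t : Fin T, Integrable (fun x => x t) π)
    (hz : ∀ (t p : Fin T) (hn : (p : ℕ) + 1 ≤ T), (p : ℕ) + 1 = (t : ℕ) →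
      ∀ g : (Fin ((p : ℕ) + 1) → ℝ) → ℝ, Continuous g → (∃ C, ∀ b, |g b| ≤ C) →
      ∫ x, g (proj T ((p : ℕ) + 1) hn x) * (x t - x p) ∂π = 0) :
    ∀ (n : ℕ) (t s : Fin T), (t : ℕ) = n → s ≤ t →
      π[(fun x => x t) | natFiltration T s] =ᵐ[π] fun x => x s := by
  intro n
  induction n with
  | zero =>
    intro t s ht hst
    have h0 : (s : ℕ) ≤ (t : ℕ) := hst
    have hts : s = t := Fin.ext (by omega)
    subst hts
    exact Filter.EventuallyEq.of_eq (condExp_of_stronglyMeasurable ((natFiltration T).le s)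
      ((eval_mble s s le_rfl).stronglyMeasurable) (hInt s))
  | succ k ih =>
    intro t s ht hst
    by_cases hst' : s = t
    · subst hst'
      exact Filter.EventuallyEq.of_eq (condExp_of_stronglyMeasurable ((natFiltration T).le s)
        ((eval_mble s s le_rfl).stronglyMeasurable) (hInt s))
    · have hslt : (s : ℕ) < (t : ℕ) := by
        rcases lt_or_eq_of_le hst with h | h
        · exact h
        · exact absurd h hst'
      have hkT : k < T := by omega
      set p : Fin T := ⟨k, hkT⟩ with hp
      have hn : (p : ℕ) + 1 ≤ T := t.isLt.le.trans_eq' (by simp [hp, ht])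
      have hps : s ≤ p := by
        show (s : ℕ) ≤ (p : ℕ)
        simp only [hp]
        omega
      have h1 : π[(fun x => x t) | natFiltration T p] =ᵐ[π] fun x => x p :=
        step π hInt t p hn (hz t p hn (by simp [hp, ht]))
      calc π[(fun x => x t) | natFiltration T s]
          =ᵐ[π] π[π[(fun x => x t) | natFiltration T p] | natFiltration T s] :=
            (condExp_condExp_of_le ((natFiltration T).mono hps) ((natFiltration T).le p)).symm
        _ =ᵐ[π] π[(fun x => x p) | natFiltration T s] := condExp_congr_ae h1
        _ =ᵐ[π] fun x => x s := ih p s (by simp [hp]) hps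

end Stmt12Aux

open Stmt12Aux in
theorem stmt12 (T : ℕ) (hT : 0 < T) (S₀ : ℝ)
    (π : Measure (Fin T → ℝ)) [IsProbabilityMeasure π]
    (hsupp : π {x | ∃ t, x t < 0} = 0) :
    (Martingale (fun (t : Fin T) (x : Fin T → ℝ) => x t) (natFiltration T) π ∧
        (∫ x : Fin T → ℝ, x ⟨0, hT⟩ ∂π) = S₀) ↔
      ((∀ t : Fin T, Integrable (fun x : Fin T → ℝ => x t) π) ∧
        ∀ Δ : ℕ → (Fin T → ℝ) → ℝ,
          (∀ t, Continuous (Δ t)) →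
          (∀ t, ∃ C, ∀ x, |Δ t x| ≤ C) →
          (∀ t, ∀ x y : Fin T → ℝ, (∀ s : Fin T, (s : ℕ) < t → x s = y s) → Δ t x = Δ t y) →
          (∫ x : Fin T → ℝ, ∑ t : Fin T,
              Δ (t : ℕ) x *
                (x t - if (t : ℕ) = 0 then S₀
                  else x ⟨(t : ℕ) - 1, lt_of_le_of_lt (Nat.sub_le _ _) t.isLt⟩) ∂π) = 0) := by
  classical
  constructor
  · rintro ⟨hM, hS⟩
    have hInt : ∀ t : Fin T, Integrable (fun x : Fin T → ℝ => x t) π := fun t => hM.integrable t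
    refine ⟨hInt, ?_⟩
    intro Δ hc hb ha
    have hgain : ∀ u : Fin T, Integrable (fun x : Fin T → ℝ =>
        x u - if (u : ℕ) = 0 then S₀
          else x ⟨(u : ℕ) - 1, lt_of_le_of_lt (Nat.sub_le _ _) u.isLt⟩) π := by
      intro u
      by_cases hu : (u : ℕ) = 0
      · simp only [hu, if_true]
        exact (hInt u).sub (integrable_const _)
      · simp only [hu, if_false]
        exact (hInt u).sub (hInt _)
    have hterm : ∀ u : Fin T, Integrable (fun x : Fin T → ℝ => Δ (u : ℕ) x *
        (x u - if (u : ℕ) = 0 then S₀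
          else x ⟨(u : ℕ) - 1, lt_of_le_of_lt (Nat.sub_le _ _) u.isLt⟩)) π := by
      intro u
      obtain ⟨C, hC⟩ := hb (u : ℕ)
      exact (hgain u).bdd_mul (hc _).aestronglyMeasurable
        (ae_of_all _ fun x => by simpa [Real.norm_eq_abs] using hC x)
    rw [integral_finset_sum _ fun u _ => hterm u]
    refine Finset.sum_eq_zero fun u _ => ?_
    by_cases hu : (u : ℕ) = 0
    · -- time-0 term : Δ 0 is constant
      have hu0 : u = ⟨0, hT⟩ := Fin.ext hu
      set c := Δ 0 (fun _ => 0) with hc0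
      have hconst : ∀ x, Δ (u : ℕ) x = c := by
        intro x
        rw [hu]
        exact ha 0 x _ fun s hs => absurd hs (Nat.not_lt_zero _)
      have h1 : ∫ x : Fin T → ℝ, Δ (u : ℕ) x *
          (x u - if (u : ℕ) = 0 then S₀
            else x ⟨(u : ℕ) - 1, lt_of_le_of_lt (Nat.sub_le _ _) u.isLt⟩) ∂π
          = ∫ x : Fin T → ℝ, c * (x ⟨0, hT⟩ - S₀) ∂π := by
        refine integral_congr_ae (Filter.Eventually.of_forall fun x => ?_)
        dsimp only
        rw [hconst x, if_pos hu, hu0]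
      rw [h1, integral_const_mul,
        integral_sub (hInt ⟨0, hT⟩) (integrable_const _), integral_const]
      simp [hS]
    · -- later terms : use the martingale property
      obtain ⟨k, hk⟩ : ∃ k, (u : ℕ) = k + 1 := ⟨(u : ℕ) - 1, by omega⟩
      have hkT : k < T := lt_trans (by omega) u.isLt
      set p : Fin T := ⟨k, hkT⟩ with hp
      have hpu : p ≤ u := by
        show (p : ℕ) ≤ (u : ℕ); simp only [hp]; omega
      have hn : k + 1 ≤ T := by omega
      -- Δ u is measurable for the σ-algebra at time p
      set ext : (Fin (k + 1) → ℝ) → (Fin T → ℝ) :=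
        fun b s => if hs : (s : ℕ) < k + 1 then b ⟨s, hs⟩ else 0 with hext
      have hextc : Continuous ext := by
        refine continuous_pi fun s => ?_
        by_cases hs : (s : ℕ) < k + 1
        · simp only [hext, dif_pos hs]
          exact continuous_apply _
        · simp only [hext, dif_neg hs]
          exact continuous_const
      have hfac : ∀ x, Δ (u : ℕ) x = Δ (u : ℕ) (ext (proj T (k + 1) hn x)) := by
        intro x
        refine ha (u : ℕ) x _ fun s hs => ?_
        have hs' : (s : ℕ) < k + 1 := by omega
        simp only [hext, proj, dif_pos hs']
        rfl
      have hsm : StronglyMeasurable[natFiltration T p] (Δ (u : ℕ)) := by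
        have hfeq : Δ (u : ℕ) = (fun b => Δ (u : ℕ) (ext b)) ∘ proj T (k + 1) hn :=
          funext hfac
        rw [hfeq, filt_eq p hn]
        exact (((hc (u : ℕ)).comp hextc).measurable.comp
          (measurable_iff_comap_le.mpr le_rfl)).stronglyMeasurable
      have hgone : π[(fun x : Fin T → ℝ => x u - x p)|natFiltration T p] =ᵐ[π] 0 := by
        have h1 : π[(fun x : Fin T → ℝ => x u)|natFiltration T p] =ᵐ[π] fun x => x p :=
          hM.condExp_ae_eq hpu
        have h2 : π[(fun x : Fin T → ℝ => x p)|natFiltration T p] =ᵐ[π] fun x => x p :=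
          hM.condExp_ae_eq (le_refl p)
        have h4 : (fun x : Fin T → ℝ => x u - x p)
            = (fun x : Fin T → ℝ => x u) - fun x : Fin T → ℝ => x p := rfl
        rw [h4]
        filter_upwards [h1, h2, condExp_sub (m := natFiltration T p) (μ := π)
          (hInt u) (hInt p)] with x e1 e2 e3
        simp only [Pi.zero_apply]
        rw [e3, Pi.sub_apply, e1, e2, sub_self]
      obtain ⟨C, hC⟩ := hb (u : ℕ)
      have hprod : Integrable ((Δ (u : ℕ)) * fun x : Fin T → ℝ => x u - x p) π :=
        ((hInt u).sub (hInt p)).bdd_mul (hc _).aestronglyMeasurable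
          (ae_of_all _ fun x => by simpa [Real.norm_eq_abs] using hC x)
      have hmul := condExp_mul_of_stronglyMeasurable_left (μ := π) hsm hprod ((hInt u).sub (hInt p))
      have hzero : ∫ x, Δ (u : ℕ) x * (x u - x p) ∂π = 0 := by
        have e1 : ∫ x, Δ (u : ℕ) x * (x u - x p) ∂π
            = ∫ x, (π[(Δ (u : ℕ)) * (fun x : Fin T → ℝ => x u - x p)|natFiltration T p]) x ∂π :=
          (integral_condExp ((natFiltration T).le p)).symm
        rw [e1]
        have e2 : ∫ x, (π[(Δ (u : ℕ)) * (fun x : Fin T → ℝ => x u - x p)|natFiltration T p]) x ∂π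
            = ∫ x, (0 : ℝ) ∂π := by
          refine integral_congr_ae ?_
          filter_upwards [hmul, hgone] with x h1 h2
          rw [h1]
          simp only [Pi.mul_apply]
          rw [h2]
          simp
        rw [e2, integral_zero]
      refine Eq.trans ?_ hzero
      refine integral_congr_ae (Filter.Eventually.of_forall fun x => ?_)
      dsimp only
      rw [if_neg hu]
      have hq : (⟨(u : ℕ) - 1, lt_of_le_of_lt (Nat.sub_le _ _) u.isLt⟩ : Fin T) = p :=
        Fin.ext (by show (u : ℕ) - 1 = k; omega)
      rw [hq]
  · rintro ⟨hInt, hΔ⟩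
    have hzc : ∀ (t p : Fin T) (hn : (p : ℕ) + 1 ≤ T), (p : ℕ) + 1 = (t : ℕ) →
        ∀ g : (Fin ((p : ℕ) + 1) → ℝ) → ℝ, Continuous g → (∃ C, ∀ b, |g b| ≤ C) →
        ∫ x, g (proj T ((p : ℕ) + 1) hn x) * (x t - x p) ∂π = 0 := by
      intro t p hn hpt g hgc hgb
      set Δ : ℕ → (Fin T → ℝ) → ℝ :=
        fun m x => if m = (t : ℕ) then g (proj T ((p : ℕ) + 1) hn x) else 0 with hΔdef
      have h1 := hΔ Δ ?_ ?_ ?_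
      rotate_left
      · intro m
        by_cases hm : m = (t : ℕ)
        · simp only [hΔdef, if_pos hm]
          exact hgc.comp (continuous_proj _ _ _)
        · simp only [hΔdef, if_neg hm]
          exact continuous_const
      · intro m
        by_cases hm : m = (t : ℕ)
        · obtain ⟨C, hC⟩ := hgb
          exact ⟨C, fun x => by simp only [hΔdef, if_pos hm]; exact hC _⟩
        · exact ⟨0, fun x => by simp [hΔdef, if_neg hm]⟩
      · intro m x y hxy
        by_cases hm : m = (t : ℕ)
        · simp only [hΔdef, if_pos hm]
          congr 1
          funext i
          refine hxy (Fin.castLE hn i) ?_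
          have hi := i.isLt
          subst hm
          show ((Fin.castLE hn i : Fin T) : ℕ) < (t : ℕ)
          simp only [Fin.coe_castLE]
          omega
        · simp [hΔdef, if_neg hm]
      refine Eq.trans ?_ h1
      refine integral_congr_ae (Filter.Eventually.of_forall fun x => ?_)
      dsimp only
      refine Eq.symm ?_
      rw [Finset.sum_eq_single t]
      · simp only [hΔdef, if_pos rfl]
        rw [if_neg (by omega : ¬ (t : ℕ) = 0)]
        have hq : (⟨(t : ℕ) - 1, lt_of_le_of_lt (Nat.sub_le _ _) t.isLt⟩ : Fin T) = p :=
          Fin.ext (by show (t : ℕ) - 1 = (p : ℕ); omega)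
        rw [hq]
      · intro v _ hv
        simp only [hΔdef]
        rw [if_neg fun h => hv (Fin.ext h), zero_mul]
      · intro h
        exact absurd (Finset.mem_univ t) h
    have hmart : Martingale (fun (t : Fin T) (x : Fin T → ℝ) => x t) (natFiltration T) π := by
      refine ⟨fun t => (eval_mble t t le_rfl).stronglyMeasurable, fun s t hst => ?_⟩
      exact mart_cond π hInt (fun t p hn hpt => hzc t p hn hpt) (t : ℕ) t s rfl hst
    refine ⟨hmart, ?_⟩
    set Δ : ℕ → (Fin T → ℝ) → ℝ := fun m _ => if m = 0 then (1 : ℝ) else 0 with hΔdef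
    have h1 := hΔ Δ (fun m => continuous_const)
      (fun m => ⟨1, fun x => by by_cases h : m = 0 <;> simp [hΔdef, h]⟩)
      (fun m x y _ => rfl)
    have h2 : ∫ x : Fin T → ℝ, (x ⟨0, hT⟩ - S₀) ∂π = 0 := by
      refine Eq.trans ?_ h1
      refine integral_congr_ae (Filter.Eventually.of_forall fun x => ?_)
      dsimp only
      refine Eq.symm ?_
      rw [Finset.sum_eq_single (⟨0, hT⟩ : Fin T)]
      · simp [hΔdef]
      · intro v _ hv
        have hv0 : ¬ (v : ℕ) = 0 := fun h => hv (Fin.ext h)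
        simp [hΔdef, hv0]
      · intro h
        exact absurd (Finset.mem_univ _) h
    rw [integral_sub (hInt ⟨0, hT⟩) (integrable_const _), integral_const] at h2
    simp only [probReal_univ, measure_univ, ENNReal.toReal_one, one_smul] at h2
    linarith
end
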